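/- arXiv:2409.10844 — 7 statements merged into one kernel-verified Lean document; each statement's English description precedes it below -/
import Mathlib

section
/- Let T be a continuous linear operator on an infinite-dimensional F-space X (topological vector space whose topology comes from a complete translation-invariant metric). If T has the specification property (with respect to the translation-invariant metric), then the Bowen topological entropy of T is infinite. -/
open Filter Topology

section Defs
variable {Y : Type*} [PseudoMetricSpace Y]

/-- A finite set `E` is `(n, ε)`-separated for the map `f`. -/
def IsSep (f : Y → Y) (n : ℕ) (ε : ℝ) (E : Finset Y) : Prop :=
  ∀ x ∈ E, ∀ y ∈ E, x ≠ y → ∃ i < n, ε < dist (f^[i] x) (f^[i] y)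

/-- Maximal cardinality of an `(n, ε)`-separated subset of `K`. -/
noncomputable def sepNum (f : Y → Y) (K : Set Y) (n : ℕ) (ε : ℝ) : ℕ :=
  sSup {m : ℕ | ∃ E : Finset Y, ↑E ⊆ K ∧ IsSep f n ε E ∧ E.card = m}

/-- Bowen topological entropy of a (uniformly continuous) map on a metric space. -/
noncomputable def entBowen (f : Y → Y) : EReal :=
  ⨆ (K : Set Y) (_ : IsCompact K) (ε : ℝ) (_ : 0 < ε),
    limsup (fun n : ℕ => ((Real.log (sepNum f K n ε) / n : ℝ) : EReal)) atTop
end Defs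

section Spec
variable {Y : Type*} [PseudoMetricSpace Y]

/-- Specification property of `f` relative to an invariant set `A`. -/
def SpecPropOn (f : Y → Y) (A : Set Y) : Prop :=
  ∀ ε : ℝ, 0 < ε → ∃ N : ℕ, ∀ s : ℕ, 0 < s → ∀ y : ℕ → Y, (∀ i < s, y i ∈ A) →
    ∀ a b : ℕ → ℕ, (∀ i < s, a i ≤ b i) → (∀ i, i + 1 < s → b i + N ≤ a (i + 1)) →
      ∃ x ∈ A, f^[N + b (s - 1)] x = x ∧
        ∀ i < s, ∀ n, a i ≤ n → n ≤ b i → dist (f^[n] x) (f^[n] (y i)) < ε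

/-- Bowen specification property. -/
def SpecProp (f : Y → Y) : Prop := SpecPropOn f Set.univ
end Spec

/-- In a metrizable topological vector space, the nonzero multiples `c • v` with `|c| ≥ 1`
of a nonzero vector stay uniformly away from `0`. -/
private lemma aux_uniform_dist {X : Type*} [AddCommGroup X] [Module ℝ X] [MetricSpace X]
    (hsmul : Continuous fun p : ℝ × X => p.1 • p.2) {v : X} (hv : v ≠ 0) :
    ∃ δ > 0, ∀ c : ℝ, 1 ≤ |c| → δ ≤ dist (c • v) 0 := by
  by_contra h
  push_neg at h
  have hseq : ∀ n : ℕ, ∃ c : ℝ, 1 ≤ |c| ∧ dist (c • v) 0 < 1 / (n + 1) := by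
    intro n
    obtain ⟨c, hc1, hc2⟩ := h (1 / (n + 1)) (by positivity)
    exact ⟨c, hc1, hc2⟩
  choose c hc1 hc2 using hseq
  have hcne : ∀ n, c n ≠ 0 := by
    intro n h0
    have := hc1 n
    rw [h0] at this
    norm_num at this
  have hinv : ∀ n, (c n)⁻¹ ∈ Set.Icc (-1 : ℝ) 1 := by
    intro n
    rw [Set.mem_Icc, ← abs_le, abs_inv]
    exact inv_le_one_of_one_le₀ (hc1 n)
  obtain ⟨a, -, φ, hφ, hconv⟩ := isCompact_Icc.tendsto_subseq hinv
  have h2 : Tendsto (fun n => c (φ n) • v) atTop (𝓝 0) := by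
    rw [tendsto_iff_dist_tendsto_zero]
    apply squeeze_zero (fun n => dist_nonneg) (fun n => (hc2 (φ n)).le.trans ?_)
      tendsto_one_div_add_atTop_nhds_zero_nat
    apply one_div_le_one_div_of_le (by positivity)
    have hle : n ≤ φ n := hφ.le_apply
    exact_mod_cast Nat.add_le_add_right hle 1
  have h3 : Tendsto (fun n => ((c (φ n))⁻¹, c (φ n) • v)) atTop (𝓝 (a, 0)) :=
    hconv.prodMk_nhds h2
  have h4 := (hsmul.tendsto (a, 0)).comp h3
  have heq : ((fun p : ℝ × X => p.1 • p.2) ∘ fun n => ((c (φ n))⁻¹, c (φ n) • v)) =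
      fun _ => v := funext fun n => inv_smul_smul₀ (hcne (φ n)) v
  rw [heq, smul_zero] at h4
  exact hv (tendsto_nhds_unique tendsto_const_nhds h4)

/-- For a compact set `K`, the cardinalities of `(n, ε)`-separated subsets of `K`
are bounded. -/
private lemma aux_bddAbove {Y : Type*} [PseudoMetricSpace Y] {f : Y → Y} (hf : Continuous f)
    {K : Set Y} (hK : IsCompact K) (n : ℕ) {ε : ℝ} (hε : 0 < ε) :
    BddAbove {m : ℕ | ∃ E : Finset Y, ↑E ⊆ K ∧ IsSep f n ε E ∧ E.card = m} := by
  classical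
  have hnet : ∀ i : ℕ, ∃ D : Finset Y, ∀ x ∈ K, ∃ y ∈ D, dist (f^[i] x) y < ε / 2 := by
    intro i
    have hC : IsCompact (f^[i] '' K) := hK.image (hf.iterate i)
    have hcov : f^[i] '' K ⊆ ⋃ y ∈ f^[i] '' K, Metric.ball y (ε / 2) := fun x hx =>
      Set.mem_biUnion hx (Metric.mem_ball_self (by positivity))
    obtain ⟨b', hb'sub, hb'fin, hb'cov⟩ :=
      hC.elim_finite_subcover_image (fun y _ => Metric.isOpen_ball) hcov
    refine ⟨hb'fin.toFinset, fun x hx => ?_⟩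
    have hx' := hb'cov (Set.mem_image_of_mem _ hx)
    rw [Set.mem_iUnion₂] at hx'
    obtain ⟨y, hy1, hy2⟩ := hx'
    exact ⟨y, hb'fin.mem_toFinset.mpr hy1, Metric.mem_ball.mp hy2⟩
  choose D hD using hnet
  have hchoice : ∀ x ∈ K, ∀ i : ℕ, ∃ y ∈ D i, dist (f^[i] x) y < ε / 2 :=
    fun x hx i => hD i x hx
  choose! g hg1 hg2 using hchoice
  refine ⟨((Finset.range n).pi fun i => D i).card, ?_⟩
  rintro m ⟨E, hEK, hEsep, rfl⟩
  apply Finset.card_le_card_of_injOn (fun x => fun i _ => g x i)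
  · intro x hx
    exact Finset.mem_pi.mpr fun i hi => hg1 x (hEK hx) i
  · intro x hx y hy heq
    by_contra hne
    obtain ⟨i, hi, hd⟩ := hEsep x (Finset.mem_coe.mp hx) y (Finset.mem_coe.mp hy) hne
    have hgy : g x i = g y i := congrFun (congrFun heq i) (Finset.mem_range.mpr hi)
    have d1 := hg2 x (hEK hx) i
    have d2 := hg2 y (hEK hy) i
    have ht := dist_triangle (f^[i] x) (g x i) (f^[i] y)
    have d2' : dist (g x i) (f^[i] y) < ε / 2 := by
      rw [hgy, dist_comm]
      exact d2
    linarith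

theorem infinite_entropy_of_specification_on_Fspace
    {X : Type*} [AddCommGroup X] [Module ℝ X] [MetricSpace X] [CompleteSpace X]
    (htrans : ∀ x y z : X, dist (x + z) (y + z) = dist x y)
    (hadd : Continuous fun p : X × X => p.1 + p.2)
    (hsmul : Continuous fun p : ℝ × X => p.1 • p.2)
    (hinf : ¬ Module.Finite ℝ X)
    (T : X →ₗ[ℝ] X) (hTc : Continuous T)
    (hspec : SpecProp (fun x => T x)) :
    entBowen (fun x => T x) = ⊤ := by
  classical
  set f : X → X := fun x => T x with hfdef
  have hfc : Continuous f := hTc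
  -- translation invariance
  have hdist0 : ∀ u w : X, dist u w = dist (u - w) 0 := by
    intro u w
    have h := htrans (u - w) 0 w
    have e1 : u - w + w = u := by abel
    rw [e1, zero_add] at h
    exact h
  -- linearity of iterates
  have hit_smul : ∀ (k : ℕ) (cc : ℝ) (x : X), f^[k] (cc • x) = cc • f^[k] x := by
    intro k
    induction k with
    | zero => intro cc x; simp
    | succ k ih =>
      intro cc x
      rw [Function.iterate_succ_apply, Function.iterate_succ_apply]
      have e : f (cc • x) = cc • f x := map_smul T cc x
      rw [e, ih]
  have hit_zero : ∀ k : ℕ, f^[k] (0 : X) = 0 := by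
    intro k
    have h := hit_smul k 0 0
    simpa using h
  -- a nonzero vector
  have hzex : ∃ z : X, z ≠ 0 := by
    by_contra h
    push_neg at h
    haveI : Subsingleton X := ⟨fun a b => (h a).trans (h b).symm⟩
    exact hinf inferInstance
  obtain ⟨z, hz⟩ := hzex
  have hdz : 0 < dist z 0 := dist_pos.mpr hz
  -- a nonzero periodic point
  obtain ⟨p, hNspec0⟩ := hspec (dist z 0 / 2) (by positivity)
  have hp : 0 < p := by
    rcases Nat.eq_zero_or_pos p with h0 | h
    · exfalso
      subst h0
      obtain ⟨x, -, -, hx⟩ :=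
        hNspec0 2 (by norm_num) (fun i => if i = 0 then (0 : X) else z)
          (fun _ _ => Set.mem_univ _) (fun _ => 0) (fun _ => 0)
          (fun _ _ => le_rfl) (fun i _ => by simp)
      have h1 : dist x (0 : X) < dist z 0 / 2 := hx 0 (by norm_num) 0 le_rfl le_rfl
      have h2 : dist x z < dist z 0 / 2 := hx 1 (by norm_num) 0 le_rfl le_rfl
      have h3 := dist_triangle z x 0
      rw [dist_comm z x] at h3
      linarith
    · exact h
  obtain ⟨x₁, -, hper0, hclose0⟩ :=
    hNspec0 1 one_pos (fun _ => z) (fun _ _ => Set.mem_univ _) (fun _ => 0) (fun _ => 0)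
      (fun _ _ => le_rfl) (fun i hi => by omega)
  have hper : f^[p] x₁ = x₁ := by simpa using hper0
  have hx₁z : dist x₁ z < dist z 0 / 2 := hclose0 0 one_pos 0 le_rfl le_rfl
  have hx₁ : x₁ ≠ 0 := by
    intro h0
    rw [h0, dist_comm] at hx₁z
    linarith
  -- the orbit of x₁ avoids 0
  have hmul : ∀ a : ℕ, f^[a * p] x₁ = x₁ := by
    intro a
    induction a with
    | zero => simp
    | succ a ih => rw [Nat.succ_mul, Function.iterate_add_apply, hper, ih]
  have horb : ∀ t : ℕ, f^[t] x₁ ≠ 0 := by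
    intro t h0
    have h1 : t ≤ (t + 1) * p := by
      calc t ≤ t + 1 := Nat.le_succ t
        _ = (t + 1) * 1 := (Nat.mul_one _).symm
        _ ≤ (t + 1) * p := Nat.mul_le_mul_left _ hp
    have h2 : ((t + 1) * p - t) + t = (t + 1) * p := Nat.sub_add_cancel h1
    have h3 : f^[(t + 1) * p] x₁ = f^[(t + 1) * p - t] (f^[t] x₁) := by
      rw [← h2, Function.iterate_add_apply]
      rw [h2]
    apply hx₁
    rw [← hmul (t + 1), h3, h0, hit_zero]
  have hmod : ∀ t : ℕ, f^[t] x₁ = f^[t % p] x₁ := by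
    intro t
    conv_lhs => rw [← Nat.mod_add_div t p]
    rw [Function.iterate_add_apply, mul_comm p (t / p), hmul]
  -- uniform separation of integer multiples over the orbit
  have hδex : ∀ t : ℕ, ∃ d > 0, ∀ cc : ℝ, 1 ≤ |cc| → d ≤ dist (cc • f^[t] x₁) 0 :=
    fun t => aux_uniform_dist hsmul (horb t)
  choose dd hddpos hdd using hδex
  obtain ⟨δ, hδpos, hδ⟩ :
      ∃ δ > 0, ∀ (t : ℕ) (cc : ℝ), 1 ≤ |cc| → δ ≤ dist (cc • f^[t] x₁) 0 := by
    refine ⟨(Finset.range p).inf' ⟨0, Finset.mem_range.mpr hp⟩ dd, ?_, ?_⟩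
    · show (0:ℝ) < (Finset.range p).inf' ⟨0, Finset.mem_range.mpr hp⟩ dd
      refine (Finset.lt_inf'_iff _).mpr ?_
      exact fun t _ => hddpos t
    · intro t cc hcc
      rw [hmod t]
      exact le_trans (Finset.inf'_le dd (Finset.mem_range.mpr (Nat.mod_lt t hp)))
        (hdd _ cc hcc)
  set ε : ℝ := δ / 4 with hεdef
  have hε : 0 < ε := by positivity
  -- specification gaps at scales ε/2^(j+1)
  choose NN hNN using fun j : ℕ => hspec (ε / 2 ^ (j + 1)) (by positivity)
  obtain ⟨q, hq1, hq2⟩ : ∃ q : ℕ → ℕ, (∀ j, NN j ≤ q j) ∧ (∀ j, j ≤ q j) :=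
    ⟨fun j => max (NN j) j, fun j => le_max_left _ _, fun j => le_max_right _ _⟩
  obtain ⟨Mj, hMpos, hMlog⟩ : ∃ Mj : ℕ → ℕ, (∀ j, 0 < Mj j) ∧
      (∀ j : ℕ, (j : ℝ) * ((q j : ℝ) + 1) ≤ Real.log (Mj j)) := by
    refine ⟨fun j => ⌈Real.exp ((j : ℝ) * ((q j : ℝ) + 1))⌉₊,
      fun j => Nat.ceil_pos.mpr (Real.exp_pos _), fun j => ?_⟩
    rw [← Real.log_exp ((j : ℝ) * ((q j : ℝ) + 1))]
    exact Real.log_le_log (Real.exp_pos _) (Nat.le_ceil _)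
  -- the basic one-step construction
  have hstage : ∀ (j : ℕ) (P : X) (cn : ℕ), ∃ x : X,
      dist x P < ε / 2 ^ (j + 1) ∧
      dist (f^[q j] x) ((cn : ℝ) • f^[q j] x₁) < ε / 2 ^ (j + 1) := by
    intro j P cn
    obtain ⟨x, -, -, hx⟩ :=
      hNN j 2 (by norm_num) (fun i => if i = 0 then P else (cn : ℝ) • x₁)
        (fun _ _ => Set.mem_univ _)
        (fun i => if i = 0 then 0 else q j) (fun i => if i = 0 then 0 else q j)
        (fun _ _ => le_rfl)
        (fun i hi => by
          have hi0 : i = 0 := by omega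
          subst hi0
          show (0 : ℕ) + NN j ≤ q j
          rw [Nat.zero_add]
          exact hq1 j)
    have h1 : dist x P < ε / 2 ^ (j + 1) := hx 0 (by norm_num) 0 le_rfl le_rfl
    have h2 : dist (f^[q j] x) (f^[q j] ((cn : ℝ) • x₁)) < ε / 2 ^ (j + 1) :=
      hx 1 (by norm_num) (q j) le_rfl le_rfl
    rw [hit_smul] at h2
    exact ⟨x, h1, h2⟩
  choose G hG1 hG2 using hstage
  -- spine and points
  obtain ⟨F, hFs⟩ : ∃ F : ℕ → X, ∀ j, F (j + 1) = G j (F j) 0 :=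
    ⟨fun j => Nat.rec (0 : X) (fun i Pi => G i Pi 0) j, fun _ => rfl⟩
  obtain ⟨pt, hpt⟩ : ∃ pt : ℕ → ℕ → X, ∀ j cn, pt j cn = G j (F j) cn :=
    ⟨fun j cn => G j (F j) cn, fun _ _ => rfl⟩
  set S : Set X := {x | ∃ j cn, cn < Mj j ∧ x = pt j cn} with hSdef
  -- chain estimate along the spine
  have hchain : ∀ J k, dist (F (J + k)) (F J) ≤ ε / 2 ^ J - ε / 2 ^ (J + k) := by
    intro J k
    induction k with
    | zero => simp
    | succ k ih =>
      have h1 : dist (F (J + (k + 1))) (F (J + k)) < ε / 2 ^ (J + k + 1) := by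
        have e : J + (k + 1) = (J + k) + 1 := by omega
        rw [e, hFs (J + k)]
        exact hG1 (J + k) (F (J + k)) 0
      have h2 : ε / 2 ^ (J + k + 1) + ε / 2 ^ (J + k + 1) = ε / 2 ^ (J + k) := by
        rw [pow_succ]; ring
      have h3 := dist_triangle (F (J + (k + 1))) (F (J + k)) (F J)
      have e2 : J + (k + 1) = J + k + 1 := by omega
      rw [e2]
      rw [e2] at h3 h1
      linarith
  have hnear : ∀ J j cn, J ≤ j → dist (pt j cn) (F J) ≤ ε / 2 ^ J := by
    intro J j cn hJ
    obtain ⟨k, rfl⟩ := Nat.exists_eq_add_of_le hJ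
    have h1 : dist (pt (J + k) cn) (F (J + k)) < ε / 2 ^ (J + k + 1) := by
      rw [hpt]
      exact hG1 _ _ _
    have h2 := hchain J k
    have h3 := dist_triangle (pt (J + k) cn) (F (J + k)) (F J)
    have h4 : ε / 2 ^ (J + k + 1) ≤ ε / 2 ^ (J + k) := by
      have h2' : ε / 2 ^ (J + k + 1) + ε / 2 ^ (J + k + 1) = ε / 2 ^ (J + k) := by
        rw [pow_succ]; ring
      have h2'' : (0:ℝ) ≤ ε / 2 ^ (J + k + 1) := by positivity
      linarith
    linarith
  -- total boundedness, compactness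
  have hTB : TotallyBounded S := by
    rw [Metric.totallyBounded_iff]
    intro r hr
    obtain ⟨J, hJ⟩ : ∃ J : ℕ, ε / 2 ^ J < r := by
      obtain ⟨J, hJ⟩ := pow_unbounded_of_one_lt (ε / r) (one_lt_two (α := ℝ))
      refine ⟨J, ?_⟩
      rw [div_lt_iff₀ (by positivity)]
      rw [div_lt_iff₀ hr] at hJ
      linarith [hJ]
    refine ⟨↑(insert (F J)
        ((Finset.range J).biUnion fun l => (Finset.range (Mj l)).image (pt l))),
      Finset.finite_toSet _, fun x hx => ?_⟩
    obtain ⟨j, cn, hcn, rfl⟩ := hx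
    by_cases hj : j < J
    · refine Set.mem_biUnion ?_ (Metric.mem_ball_self hr)
      exact Finset.mem_coe.mpr (Finset.mem_insert_of_mem (Finset.mem_biUnion.mpr
        ⟨j, Finset.mem_range.mpr hj,
          Finset.mem_image.mpr ⟨cn, Finset.mem_range.mpr hcn, rfl⟩⟩))
    · push_neg at hj
      refine Set.mem_biUnion (Finset.mem_coe.mpr (Finset.mem_insert_self _ _)) ?_
      rw [Metric.mem_ball]
      exact lt_of_le_of_lt (hnear J j cn hj) hJ
  set K : Set X := closure S with hKdef
  have hKc : IsCompact K := by
    rw [hKdef, isCompact_iff_totallyBounded_isComplete]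
    exact ⟨hTB.closure, isClosed_closure.isComplete⟩
  -- separation
  have hsep : ∀ j c1 c2, c1 ≠ c2 →
      ε < dist (f^[q j] (pt j c1)) (f^[q j] (pt j c2)) := by
    intro j c1 c2 hcc
    have habs : 1 ≤ |(c1 : ℝ) - (c2 : ℝ)| := by
      have h2 : 1 ≤ |(c1 : ℤ) - (c2 : ℤ)| :=
        Int.one_le_abs (sub_ne_zero.mpr (by exact_mod_cast hcc))
      calc (1 : ℝ) = ((1 : ℤ) : ℝ) := by norm_num
        _ ≤ (|(c1 : ℤ) - (c2 : ℤ)| : ℤ) := by exact_mod_cast h2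
        _ = |(c1 : ℝ) - (c2 : ℝ)| := by push_cast; ring
    have hdd2 := hδ (q j) ((c1 : ℝ) - c2) habs
    have heq : dist ((c1 : ℝ) • f^[q j] x₁) ((c2 : ℝ) • f^[q j] x₁) =
        dist (((c1 : ℝ) - c2) • f^[q j] x₁) 0 := by
      rw [hdist0, sub_smul]
    have h1 : dist (f^[q j] (pt j c1)) ((c1 : ℝ) • f^[q j] x₁) < ε / 2 ^ (j + 1) := by
      rw [hpt]; exact hG2 j (F j) c1
    have h2 : dist (f^[q j] (pt j c2)) ((c2 : ℝ) • f^[q j] x₁) < ε / 2 ^ (j + 1) := by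
      rw [hpt]; exact hG2 j (F j) c2
    have h3 : ε / 2 ^ (j + 1) ≤ ε / 2 := by
      gcongr
      calc (2:ℝ) = 2 ^ 1 := (pow_one 2).symm
        _ ≤ 2 ^ (j + 1) := pow_le_pow_right₀ one_le_two (by omega)
    have h4 := dist_triangle4 ((c1 : ℝ) • f^[q j] x₁) (f^[q j] (pt j c1))
      (f^[q j] (pt j c2)) ((c2 : ℝ) • f^[q j] x₁)
    rw [dist_comm ((c1 : ℝ) • f^[q j] x₁) (f^[q j] (pt j c1))] at h4
    rw [heq] at h4
    have hδ4 : δ = 4 * ε := by rw [hεdef]; ring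
    linarith
  -- the separated families
  have hmemset : ∀ j, Mj j ∈
      {m : ℕ | ∃ E : Finset X, ↑E ⊆ K ∧ IsSep f (q j + 1) ε E ∧ E.card = m} := by
    intro j
    refine ⟨(Finset.range (Mj j)).image (pt j), ?_, ?_, ?_⟩
    · intro x hx
      obtain ⟨cn, hcn, rfl⟩ := Finset.mem_image.mp (Finset.mem_coe.mp hx)
      exact subset_closure ⟨j, cn, Finset.mem_range.mp hcn, rfl⟩
    · intro x hx y hy hxy
      obtain ⟨c1, hc1, rfl⟩ := Finset.mem_image.mp hx
      obtain ⟨c2, hc2, rfl⟩ := Finset.mem_image.mp hy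
      exact ⟨q j, Nat.lt_succ_self _, hsep j c1 c2 (fun h => hxy (by rw [h]))⟩
    · rw [Finset.card_image_of_injOn, Finset.card_range]
      intro c1 _ c2 _ h
      by_contra hne
      have hs := hsep j c1 c2 hne
      rw [h] at hs
      simp only [dist_self] at hs
      linarith
  have hsepNum : ∀ j, Mj j ≤ sepNum f K (q j + 1) ε :=
    fun j => le_csSup (aux_bddAbove hfc hKc (q j + 1) hε) (hmemset j)
  have hval : ∀ j : ℕ, (j : ℝ) ≤
      Real.log (sepNum f K (q j + 1) ε) / ((q j + 1 : ℕ) : ℝ) := by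
    intro j
    have hq1' : (0 : ℝ) < ((q j + 1 : ℕ) : ℝ) := by positivity
    rw [le_div_iff₀ hq1']
    have hcast : ((q j + 1 : ℕ) : ℝ) = (q j : ℝ) + 1 := by push_cast; ring
    rw [hcast]
    calc (j : ℝ) * ((q j : ℝ) + 1) ≤ Real.log (Mj j) := hMlog j
      _ ≤ Real.log (sepNum f K (q j + 1) ε) :=
        Real.log_le_log (by exact_mod_cast hMpos j) (by exact_mod_cast hsepNum j)
  -- the limsup is ⊤
  have hfreq : ∀ M₀ : ℝ, (M₀ : EReal) ≤
      limsup (fun n : ℕ => ((Real.log (sepNum f K n ε) / n : ℝ) : EReal)) atTop := by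
    intro M₀
    refine le_limsup_of_frequently_le ?_ (Filter.isBoundedUnder_of ⟨⊤, fun a => le_top⟩)
    rw [frequently_atTop]
    intro n₀
    refine ⟨q (max n₀ ⌈M₀⌉₊) + 1, ?_, ?_⟩
    · have ha : n₀ ≤ max n₀ ⌈M₀⌉₊ := le_max_left _ _
      have hb := hq2 (max n₀ ⌈M₀⌉₊)
      omega
    · have h1 : M₀ ≤ ((max n₀ ⌈M₀⌉₊ : ℕ) : ℝ) := by
        refine le_trans (Nat.le_ceil M₀) ?_
        exact_mod_cast le_max_right n₀ ⌈M₀⌉₊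
      have h2 := hval (max n₀ ⌈M₀⌉₊)
      exact EReal.coe_le_coe_iff.mpr (le_trans h1 h2)
  have htop : limsup (fun n : ℕ => ((Real.log (sepNum f K n ε) / n : ℝ) : EReal)) atTop
      = ⊤ := by
    have key : ∀ L : EReal, (∀ M₀ : ℝ, (M₀ : EReal) ≤ L) → L = ⊤ := by
      intro L hL
      induction L using EReal.rec with
      | bot => simpa using hL 0
      | coe x =>
        exfalso
        have := EReal.coe_le_coe_iff.mp (hL (x + 1))
        linarith
      | top => rfl
    exact key _ hfreq
  have hle : limsup (fun n : ℕ => ((Real.log (sepNum f K n ε) / n : ℝ) : EReal)) atTop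
      ≤ entBowen f := by
    rw [entBowen]
    exact le_iSup_of_le K (le_iSup_of_le hKc (le_iSup_of_le ε (le_iSup_of_le hε le_rfl)))
  rw [htop] at hle
  exact top_le_iff.mp hle
end

section
/- A continuous linear operator on a Banach space cannot have the specification property; more precisely, any linear map on a nontrivial Banach space satisfying the specification property with respect to the norm metric is unbounded. -/
open Filter Topology

theorem not_continuous_of_specification_on_banach
    {X : Type*} [NormedAddCommGroup X] [NormedSpace ℂ X] [CompleteSpace X] [Nontrivial X]
    (L : X →ₗ[ℂ] X) (h : SpecProp (fun x => L x)) :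
    ¬ Continuous L := by
  intro hc
  set f : X → X := fun x => L x with hf
  -- f is bounded by C := max ‖L‖ 1
  let L' : X →L[ℂ] X := { toLinearMap := L, cont := hc }
  set C : ℝ := max ‖L'‖ 1 with hC
  have hC1 : (1 : ℝ) ≤ C := le_max_right _ _
  have hC0 : (0 : ℝ) ≤ C := le_trans zero_le_one hC1
  have hbound : ∀ (n : ℕ) (z : X), ‖f^[n] z‖ ≤ C ^ n * ‖z‖ := by
    intro n
    induction n with
    | zero => intro z; simp
    | succ n ih =>
      intro z
      rw [Function.iterate_succ_apply']
      have h1 : ‖f (f^[n] z)‖ ≤ C * ‖f^[n] z‖ := by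
        calc ‖f (f^[n] z)‖ = ‖L' (f^[n] z)‖ := rfl
          _ ≤ ‖L'‖ * ‖f^[n] z‖ := L'.le_opNorm _
          _ ≤ C * ‖f^[n] z‖ :=
            mul_le_mul_of_nonneg_right (le_max_left _ _) (norm_nonneg _)
      calc ‖f (f^[n] z)‖ ≤ C * ‖f^[n] z‖ := h1
        _ ≤ C * (C ^ n * ‖z‖) := mul_le_mul_of_nonneg_left (ih z) hC0
        _ = C ^ (n + 1) * ‖z‖ := by ring
  have hsmul : ∀ (n : ℕ) (c : ℂ) (w : X), f^[n] (c • w) = c • f^[n] w := by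
    intro n c
    induction n with
    | zero => intro w; simp
    | succ n ih =>
      intro w
      rw [Function.iterate_succ_apply', Function.iterate_succ_apply', ih]
      exact L.map_smul c _
  obtain ⟨N, hN⟩ := h 1 one_pos
  -- find a nonzero fixed point of f^[N]
  obtain ⟨w, hw⟩ := exists_ne (0 : X)
  have hwn : ‖w‖ ≠ 0 := norm_ne_zero_iff.mpr hw
  set v : X := ((2 / ‖w‖ : ℝ) : ℂ) • w with hv
  have hvnorm : ‖v‖ = 2 := by
    rw [hv, norm_smul]
    simp [abs_of_nonneg (by positivity : (0:ℝ) ≤ 2 / ‖w‖), div_mul_cancel₀, hwn]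
  obtain ⟨x₁, -, hx₁per, hx₁tr⟩ :=
    hN 1 one_pos (fun _ => v) (fun _ _ => Set.mem_univ _) (fun _ => 0) (fun _ => 0)
      (fun _ _ => le_rfl) (fun i hi => by omega)
  have hx₁fix : f^[N] x₁ = x₁ := by simpa using hx₁per
  have hx₁close : dist x₁ v < 1 := by
    have := hx₁tr 0 one_pos 0 le_rfl le_rfl
    simpa using this
  have hx₁norm : 1 < ‖x₁‖ := by
    have h2 : ‖v‖ - ‖x₁‖ ≤ dist x₁ v := by
      rw [dist_eq_norm]
      have := norm_sub_norm_le (v) (x₁)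
      calc ‖v‖ - ‖x₁‖ ≤ ‖v - x₁‖ := norm_sub_norm_le _ _
        _ = ‖x₁ - v‖ := norm_sub_rev _ _
    rw [hvnorm] at h2
    linarith
  have hx₁pos : (0:ℝ) < ‖x₁‖ := lt_trans one_pos hx₁norm
  -- choose large multiple
  obtain ⟨n, hn⟩ := exists_nat_gt ((C ^ N + 2) / ‖x₁‖)
  have hnbig : C ^ N + 2 < (n : ℝ) * ‖x₁‖ := by
    rw [div_lt_iff₀ hx₁pos] at hn
    linarith
  -- apply spec with two segments
  obtain ⟨z, -, hzper, hztr⟩ :=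
    hN 2 two_pos (fun i => if i = 0 then (0:X) else (n:ℂ) • x₁)
      (fun _ _ => Set.mem_univ _)
      (fun i => if i = 0 then 0 else N) (fun i => if i = 0 then 0 else N)
      (fun _ _ => le_rfl)
      (fun i hi => by
        have : i = 0 := by omega
        subst this; simp)
  have hz0 : ‖z‖ < 1 := by
    have := hztr 0 (by norm_num) 0 (by simp) (by simp)
    simpa using this
  have hzN : dist (f^[N] z) (f^[N] ((n:ℂ) • x₁)) < 1 := by
    have := hztr 1 (by norm_num) N (by simp) (by simp)
    simpa using this
  have hfixn : f^[N] ((n:ℂ) • x₁) = (n:ℂ) • x₁ := by rw [hsmul, hx₁fix]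
  rw [hfixn, dist_eq_norm] at hzN
  have hlow : (n : ℝ) * ‖x₁‖ - ‖f^[N] z‖ < 1 := by
    have h2 : ‖(n:ℂ) • x₁‖ - ‖f^[N] z‖ ≤ ‖f^[N] z - (n:ℂ) • x₁‖ := by
      calc ‖(n:ℂ) • x₁‖ - ‖f^[N] z‖ ≤ ‖(n:ℂ) • x₁ - f^[N] z‖ := norm_sub_norm_le _ _
        _ = ‖f^[N] z - (n:ℂ) • x₁‖ := norm_sub_rev _ _
    have h3 : ‖(n:ℂ) • x₁‖ = (n:ℝ) * ‖x₁‖ := by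
      rw [norm_smul]; simp
    rw [h3] at h2
    linarith
  have hup : ‖f^[N] z‖ ≤ C ^ N := by
    calc ‖f^[N] z‖ ≤ C ^ N * ‖z‖ := hbound N z
      _ ≤ C ^ N * 1 := mul_le_mul_of_nonneg_left (le_of_lt hz0) (pow_nonneg hC0 _)
      _ = C ^ N := mul_one _
  linarith
end

section
/- The Rolewicz operator T = αB on ℓ^p(ℕ), with |α| > 1 and 1 ≤ p < ∞, has infinite Bowen topological entropy. -/
open scoped ENNReal

open Filter Topology

section AuxSep
variable {Y : Type*} [PseudoMetricSpace Y]

lemma bddAbove_sep (f : Y → Y) (hf : Continuous f) {K : Set Y} (hK : IsCompact K)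
    (n : ℕ) {ε : ℝ} (hε : 0 < ε) :
    BddAbove {m : ℕ | ∃ E : Finset Y, ↑E ⊆ K ∧ IsSep f n ε E ∧ E.card = m} := by
  classical
  set Φ : Y → (Fin n → Y) := fun x i => f^[(i : ℕ)] x with hΦ
  have hΦc : Continuous Φ := continuous_pi fun i => hf.iterate _
  have hcomp : IsCompact (Φ '' K) := hK.image hΦc
  obtain ⟨t, htfin, hcover⟩ := Metric.totallyBounded_iff.1 hcomp.totallyBounded (ε / 2)
    (by positivity)
  set c : Y → (Fin n → Y) := fun x =>
    if h : ∃ y ∈ t, Φ x ∈ Metric.ball y (ε / 2) then h.choose else Φ x with hc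
  refine ⟨htfin.toFinset.card, ?_⟩
  rintro m ⟨E, hEK, hsep, rfl⟩
  refine Finset.card_le_card_of_injOn c ?_ ?_
  · intro x hx
    have hx' : ∃ y ∈ t, Φ x ∈ Metric.ball y (ε / 2) := by
      have := hcover ⟨x, hEK hx, rfl⟩
      simpa using this
    simp only [hc, dif_pos hx']
    exact htfin.mem_toFinset.2 hx'.choose_spec.1
  · intro x hx y hy hcxy
    by_contra hne
    have hxE : x ∈ E := by simpa using hx
    have hyE : y ∈ E := by simpa using hy
    obtain ⟨i, hi, hdi⟩ := hsep x hxE y hyE hne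
    have hx' : ∃ z ∈ t, Φ x ∈ Metric.ball z (ε / 2) := by
      simpa using hcover ⟨x, hEK hxE, rfl⟩
    have hy' : ∃ z ∈ t, Φ y ∈ Metric.ball z (ε / 2) := by
      simpa using hcover ⟨y, hEK hyE, rfl⟩
    have hbx : Φ x ∈ Metric.ball (c x) (ε / 2) := by
      simp only [hc, dif_pos hx']; exact hx'.choose_spec.2
    have hby : Φ y ∈ Metric.ball (c y) (ε / 2) := by
      simp only [hc, dif_pos hy']; exact hy'.choose_spec.2
    rw [hcxy] at hbx
    have h1 : dist (Φ x) (Φ y) < ε := by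
      have := dist_triangle (Φ x) (c y) (Φ y)
      rw [Metric.mem_ball] at hbx hby
      rw [dist_comm (Φ y)] at hby
      linarith
    have h2 : dist (f^[i] x) (f^[i] y) ≤ dist (Φ x) (Φ y) := by
      have := dist_le_pi_dist (Φ x) (Φ y) ⟨i, hi⟩
      simpa [hΦ] using this
    linarith

end AuxSep

section Work
variable (p : ℝ≥0∞) [Fact (1 ≤ p)] (hp : p ≠ ⊤)

lemma hpt_pos (hp : p ≠ ⊤) : 0 < p.toReal :=
  ENNReal.toReal_pos (by
    have h1 : (1 : ℝ≥0∞) ≤ p := Fact.out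
    exact fun h => by simp [h] at h1) hp

-- grid map
noncomputable def gFun (b : ℝ) (M : ℕ) (t : ℕ → Fin (M + 1)) : ℕ → ℂ :=
  fun i => ((t i : ℕ) : ℂ) * (b : ℂ) ^ i

lemma gFun_norm_le {b : ℝ} (hb0 : 0 < b) (M : ℕ) (t : ℕ → Fin (M + 1)) (i : ℕ) :
    ‖gFun b M t i‖ ≤ (M + 1 : ℝ) * b ^ i := by
  rw [gFun, norm_mul]
  have h1 : ‖((t i : ℕ) : ℂ)‖ ≤ (M + 1 : ℝ) := by
    rw [Complex.norm_natCast]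
    exact_mod_cast le_of_lt (t i).isLt
  have h2 : ‖((b : ℂ)) ^ i‖ = b ^ i := by
    rw [norm_pow, Complex.norm_real, Real.norm_of_nonneg hb0.le]
  rw [h2]
  exact mul_le_mul_of_nonneg_right h1 (pow_nonneg hb0.le i)

lemma summable_aux {b : ℝ} (hb0 : 0 < b) (hb1 : b < 1) (hpt : 0 < p.toReal) (C : ℝ)
    (hC : 0 ≤ C) :
    Summable fun i : ℕ => (C * b ^ i) ^ p.toReal := by
  have : ∀ i : ℕ, (C * b ^ i) ^ p.toReal = C ^ p.toReal * (b ^ p.toReal) ^ i := by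
    intro i
    rw [Real.mul_rpow hC (pow_nonneg hb0.le i), ← Real.rpow_natCast b i,
      ← Real.rpow_natCast (b ^ p.toReal) i, ← Real.rpow_mul hb0.le, ← Real.rpow_mul hb0.le,
      mul_comm (i:ℝ), mul_comm]
  simp_rw [this]
  exact (summable_geometric_of_lt_one (Real.rpow_nonneg hb0.le _)
    (Real.rpow_lt_one hb0.le hb1 hpt)).mul_left _

lemma gFun_memℓp {b : ℝ} (hb0 : 0 < b) (hb1 : b < 1) (hpt : 0 < p.toReal) (M : ℕ)
    (t : ℕ → Fin (M + 1)) : Memℓp (gFun b M t) p := by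
  apply memℓp_gen
  apply Summable.of_nonneg_of_le (fun i => Real.rpow_nonneg (norm_nonneg _) _)
    (fun i => Real.rpow_le_rpow (norm_nonneg _) (gFun_norm_le hb0 M t i) hpt.le)
  exact summable_aux p hb0 hb1 hpt _ (by positivity)


variable {p} in
/-- The grid point in `lp` associated to `t`. -/
noncomputable def Gmap {b : ℝ} (hb0 : 0 < b) (hb1 : b < 1) (hpt : 0 < p.toReal) (M : ℕ)
    (t : ℕ → Fin (M + 1)) : lp (fun _ : ℕ => ℂ) p :=
  ⟨gFun b M t, gFun_memℓp p hb0 hb1 hpt M t⟩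

variable {p} in
lemma Gmap_coe {b : ℝ} (hb0 : 0 < b) (hb1 : b < 1) (hpt : 0 < p.toReal) (M : ℕ)
    (t : ℕ → Fin (M + 1)) : ((Gmap hb0 hb1 hpt M t : lp (fun _ : ℕ => ℂ) p) : ℕ → ℂ) = gFun b M t :=
  rfl

variable {p} in
lemma Gmap_inj {b : ℝ} (hb0 : 0 < b) (hb1 : b < 1) (hpt : 0 < p.toReal) (M : ℕ) :
    Function.Injective (Gmap (p := p) hb0 hb1 hpt M) := by
  intro t s h
  funext i
  have h2 : gFun b M t i = gFun b M s i := by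
    rw [← Gmap_coe hb0 hb1 hpt M t, ← Gmap_coe hb0 hb1 hpt M s, h]
  rw [gFun, gFun] at h2
  have hb : ((b : ℂ)) ^ i ≠ 0 := pow_ne_zero _ (by exact_mod_cast hb0.ne')
  have h3 : (((t i : ℕ) : ℂ)) = ((s i : ℕ) : ℂ) := mul_right_cancel₀ hb h2
  have h4 : (t i : ℕ) = (s i : ℕ) := Nat.cast_injective h3
  exact Fin.ext h4

variable {p} in
/-- Tail estimate: if `t` and `s` agree below `N`, the distance of grid points is small. -/
lemma Gmap_dist_le {b : ℝ} (hb0 : 0 < b) (hb1 : b < 1) (hpt : 0 < p.toReal) (M : ℕ)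
    (t s : ℕ → Fin (M + 1)) (N : ℕ) (hts : ∀ i < N, t i = s i) :
    ‖Gmap (p := p) hb0 hb1 hpt M t - Gmap hb0 hb1 hpt M s‖ ≤
      ((2 * (M + 1)) ^ p.toReal * (b ^ p.toReal) ^ N / (1 - b ^ p.toReal)) ^ (1 / p.toReal) := by
  set q : ℝ := b ^ p.toReal with hqdef
  have hq0 : 0 < q := Real.rpow_pos_of_pos hb0 _
  have hq1 : q < 1 := Real.rpow_lt_one hb0.le hb1 hpt
  set A : ℝ := (2 * (M + 1)) ^ p.toReal * q ^ N / (1 - q) with hAdef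
  have hA0 : 0 ≤ A := by
    apply div_nonneg _ (by linarith)
    positivity
  set d : lp (fun _ : ℕ => ℂ) p := Gmap (p := p) hb0 hb1 hpt M t - Gmap hb0 hb1 hpt M s with hd
  have hdco : ∀ i, (d : ℕ → ℂ) i = gFun b M t i - gFun b M s i := by
    intro i
    rw [hd]
    have := lp.coeFn_sub (Gmap (p := p) hb0 hb1 hpt M t) (Gmap hb0 hb1 hpt M s)
    rw [this]
    simp [Gmap_coe]
  -- coordinatewise bounds
  have hbound : ∀ i, ‖(d : ℕ → ℂ) i‖ ≤ 2 * (M + 1) * b ^ i := by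
    intro i
    rw [hdco i]
    calc ‖gFun b M t i - gFun b M s i‖ ≤ ‖gFun b M t i‖ + ‖gFun b M s i‖ := norm_sub_le _ _
    _ ≤ (M + 1 : ℝ) * b ^ i + (M + 1 : ℝ) * b ^ i :=
        add_le_add (gFun_norm_le hb0 M t i) (gFun_norm_le hb0 M s i)
    _ = 2 * (M + 1) * b ^ i := by ring
  have hzero : ∀ i < N, (d : ℕ → ℂ) i = 0 := by
    intro i hi
    rw [hdco i, gFun, gFun, hts i hi, sub_self]
  -- sum the bounds
  apply lp.norm_le_of_tsum_le hpt (Real.rpow_nonneg hA0 _)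
  have hApow : ((A : ℝ) ^ (1 / p.toReal)) ^ p.toReal = A := by
    rw [← Real.rpow_mul hA0, one_div, inv_mul_cancel₀ hpt.ne', Real.rpow_one]
  rw [hApow]
  -- tsum bound
  have hsum1 : Summable fun i : ℕ => ‖(d : ℕ → ℂ) i‖ ^ p.toReal := by
    apply Summable.of_nonneg_of_le (fun i => Real.rpow_nonneg (norm_nonneg _) _)
      (fun i => Real.rpow_le_rpow (norm_nonneg _) (hbound i) hpt.le)
    exact summable_aux p hb0 hb1 hpt _ (by positivity)
  have hgeo : Summable fun i : ℕ => (2 * ((M : ℝ) + 1) * b ^ i) ^ p.toReal :=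
    summable_aux p hb0 hb1 hpt _ (by positivity)
  have hshift := (Summable.sum_add_tsum_nat_add N hsum1).symm
  rw [hshift]
  have hfirst : ∑ i ∈ Finset.range N, ‖(d : ℕ → ℂ) i‖ ^ p.toReal = 0 := by
    apply Finset.sum_eq_zero
    intro i hi
    rw [hzero i (Finset.mem_range.1 hi)]
    simp [Real.zero_rpow hpt.ne']
  rw [hfirst, zero_add]
  have hcomm : ∀ j : ℕ, (b ^ j) ^ p.toReal = q ^ j := by
    intro j
    rw [← Real.rpow_natCast b j, ← Real.rpow_mul hb0.le, mul_comm, Real.rpow_mul hb0.le,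
      Real.rpow_natCast]
  have hterm : ∀ i : ℕ, ‖(d : ℕ → ℂ) (i + N)‖ ^ p.toReal ≤
      (2 * ((M : ℝ) + 1)) ^ p.toReal * q ^ N * q ^ i := by
    intro i
    have h1 : ‖(d : ℕ → ℂ) (i + N)‖ ^ p.toReal ≤ (2 * ((M : ℝ) + 1) * b ^ (i + N)) ^ p.toReal :=
      Real.rpow_le_rpow (norm_nonneg _) (hbound (i + N)) hpt.le
    refine h1.trans (le_of_eq ?_)
    rw [Real.mul_rpow (by positivity) (pow_nonneg hb0.le _), hcomm, pow_add]
    ring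
  have hsum2 : Summable fun i : ℕ => (2 * ((M : ℝ) + 1)) ^ p.toReal * q ^ N * q ^ i :=
    (summable_geometric_of_lt_one hq0.le hq1).mul_left _
  calc ∑' i : ℕ, ‖(d : ℕ → ℂ) (i + N)‖ ^ p.toReal
      ≤ ∑' i : ℕ, (2 * ((M : ℝ) + 1)) ^ p.toReal * q ^ N * q ^ i :=
        Summable.tsum_le_tsum hterm ((summable_nat_add_iff N).2 hsum1) hsum2
    _ = (2 * ((M : ℝ) + 1)) ^ p.toReal * q ^ N * (1 - q)⁻¹ := by
        rw [tsum_mul_left, tsum_geometric_of_lt_one hq0.le hq1]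
    _ = A := by rw [hAdef, div_eq_mul_inv]

variable {p} in
lemma Gmap_continuous {b : ℝ} (hb0 : 0 < b) (hb1 : b < 1) (hpt : 0 < p.toReal) (M : ℕ) :
    Continuous (Gmap (p := p) hb0 hb1 hpt M) := by
  classical
  set q : ℝ := b ^ p.toReal with hqdef
  have hq0 : 0 < q := Real.rpow_pos_of_pos hb0 _
  have hq1 : q < 1 := Real.rpow_lt_one hb0.le hb1 hpt
  set GN : ℕ → (ℕ → Fin (M + 1)) → lp (fun _ : ℕ => ℂ) p :=
    fun N t => Gmap hb0 hb1 hpt M (fun i => if h : i < N then t i else 0) with hGNdef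
  have hGNc : ∀ N, Continuous (GN N) := by
    intro N
    have heq : GN N = (fun v : Fin N → Fin (M + 1) =>
        Gmap (p := p) hb0 hb1 hpt M (fun i => if h : i < N then v ⟨i, h⟩ else 0)) ∘
        (fun t (j : Fin N) => t j) := rfl
    rw [heq]
    exact continuous_of_discreteTopology.comp (continuous_pi fun j => continuous_apply _)
  set τ : ℕ → ℝ := fun N =>
    ((2 * ((M : ℝ) + 1)) ^ p.toReal * q ^ N / (1 - q)) ^ (1 / p.toReal) with hτdef
  have hτ0 : Tendsto τ atTop (𝓝 0) := by
    have h1 : Tendsto (fun N : ℕ => (2 * ((M : ℝ) + 1)) ^ p.toReal * q ^ N / (1 - q)) atTop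
        (𝓝 0) := by
      have := (tendsto_pow_atTop_nhds_zero_of_lt_one hq0.le hq1).const_mul
        ((2 * ((M : ℝ) + 1)) ^ p.toReal)
      have h2 := this.div_const (1 - q)
      simpa using h2
    have h3 := h1.rpow_const (p := 1 / p.toReal) (Or.inr (by positivity))
    rwa [Real.zero_rpow (by positivity : (1 : ℝ) / p.toReal ≠ 0)] at h3
  have hTU : TendstoUniformly GN (Gmap (p := p) hb0 hb1 hpt M) atTop := by
    rw [Metric.tendstoUniformly_iff]
    intro ε hε
    filter_upwards [hτ0 (Iio_mem_nhds hε)] with N hN t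
    have hagree : ∀ i < N, t i = (fun i => if h : i < N then t i else 0) i := by
      intro i hi; simp [hi]
    have hd := Gmap_dist_le (p := p) hb0 hb1 hpt M t _ N hagree
    rw [dist_eq_norm]
    calc ‖Gmap (p := p) hb0 hb1 hpt M t - GN N t‖ ≤ τ N := hd
    _ < ε := hN
  exact hTU.continuous (Eventually.of_forall hGNc).frequently

variable {p} in
lemma Gmap_isCompact_range {b : ℝ} (hb0 : 0 < b) (hb1 : b < 1) (hpt : 0 < p.toReal) (M : ℕ) :
    IsCompact (Set.range (Gmap (p := p) hb0 hb1 hpt M)) :=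
  isCompact_range (Gmap_continuous hb0 hb1 hpt M)

end Work

theorem rolewicz_infinite_entropy
    (p : ℝ≥0∞) [Fact (1 ≤ p)] (hp : p ≠ ⊤) (α : ℂ) (hα : 1 < ‖α‖)
    (T : lp (fun _ : ℕ => ℂ) p →L[ℂ] lp (fun _ : ℕ => ℂ) p)
    (hT : ∀ (x : lp (fun _ : ℕ => ℂ) p) (n : ℕ), (T x : ℕ → ℂ) n = α * (x : ℕ → ℂ) (n + 1)) :
    entBowen (fun x => T x) = ⊤ := by
  classical
  set r : ℝ := ‖α‖ with hrdef
  set b : ℝ := 2 / (1 + r) with hbdef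
  have hr1 : 1 < r := hα
  have hb0 : 0 < b := by rw [hbdef]; positivity
  have hb1 : b < 1 := by
    rw [hbdef, div_lt_one (by linarith)]; linarith
  have hrb : 1 ≤ r * b := by
    rw [hbdef, mul_div_assoc']
    rw [le_div_iff₀ (by linarith : (0:ℝ) < 1 + r)]
    linarith
  have hpt : 0 < p.toReal := hpt_pos p hp
  set f : lp (fun _ : ℕ => ℂ) p → lp (fun _ : ℕ => ℂ) p := fun x => T x with hfdef
  -- iterate formula
  have hIter : ∀ (i : ℕ) (x : lp (fun _ : ℕ => ℂ) p) (j : ℕ),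
      ((f^[i] x : lp (fun _ : ℕ => ℂ) p) : ℕ → ℂ) j = α ^ i * (x : ℕ → ℂ) (j + i) := by
    intro i
    induction i with
    | zero => intro x j; simp
    | succ i ih =>
      intro x j
      rw [Function.iterate_succ_apply, ih (f x) j]
      have hfx : ((f x : lp (fun _ : ℕ => ℂ) p) : ℕ → ℂ) (j + i) = α * (x : ℕ → ℂ) (j + i + 1) :=
        hT x (j + i)
      rw [hfx]
      have hidx : j + (i + 1) = j + i + 1 := by omega
      rw [hidx, pow_succ]
      ring
  -- main estimate: for every M, entBowen f ≥ log (M+1)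
  have hmain : ∀ M : ℕ, (Real.log (M + 1) : EReal) ≤ entBowen f := by
    intro M
    set K : Set (lp (fun _ : ℕ => ℂ) p) := Set.range (Gmap (p := p) hb0 hb1 hpt M) with hKdef
    have hKc : IsCompact K := Gmap_isCompact_range hb0 hb1 hpt M
    -- the separated sets
    have hsepnum : ∀ n : ℕ, (M + 1) ^ n ≤ sepNum f K n (1 / 2) := by
      intro n
      set ext : (Fin n → Fin (M + 1)) → (ℕ → Fin (M + 1)) :=
        fun v i => if h : i < n then v ⟨i, h⟩ else 0 with hextdef
      have hextinj : Function.Injective ext := by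
        intro v w h
        funext j
        have := congrFun h (j : ℕ)
        simpa [hextdef, j.isLt] using this
      set E : Finset (lp (fun _ : ℕ => ℂ) p) :=
        Finset.image (fun v : Fin n → Fin (M + 1) => Gmap (p := p) hb0 hb1 hpt M (ext v))
          Finset.univ with hEdef
      have hEK : ↑E ⊆ K := by
        intro x hx
        simp only [hEdef, Finset.coe_image, Set.mem_image] at hx
        obtain ⟨v, _, rfl⟩ := hx
        exact ⟨ext v, rfl⟩
      have hcard : E.card = (M + 1) ^ n := by
        have hinj' : Function.Injective
            (fun v : Fin n → Fin (M + 1) => Gmap (p := p) hb0 hb1 hpt M (ext v)) :=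
          fun v w h => hextinj (Gmap_inj hb0 hb1 hpt M h)
        rw [hEdef, Finset.card_image_of_injective _ hinj', Finset.card_univ, Fintype.card_fun]
        simp
      have hsep : IsSep f n (1 / 2) E := by
        intro x hx y hy hne
        simp only [hEdef, Finset.mem_image] at hx hy
        obtain ⟨v, -, rfl⟩ := hx
        obtain ⟨w, -, rfl⟩ := hy
        have hvw : ext v ≠ ext w := fun h => hne (by rw [h])
        obtain ⟨i0, hi0⟩ : ∃ i0, ext v i0 ≠ ext w i0 := by
          by_contra h
          push_neg at h
          exact hvw (funext h)
        have hi0n : i0 < n := by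
          by_contra h
          apply hi0
          simp [hextdef, h]
        refine ⟨i0, hi0n, ?_⟩
        -- the distance estimate via coordinate 0 at time i0
        set x := Gmap (p := p) hb0 hb1 hpt M (ext v)
        set y := Gmap (p := p) hb0 hb1 hpt M (ext w)
        have hco : ((f^[i0] x - f^[i0] y : lp (fun _ : ℕ => ℂ) p) : ℕ → ℂ) 0
            = α ^ i0 * ((gFun b M (ext v) i0) - (gFun b M (ext w) i0)) := by
          rw [lp.coeFn_sub]
          simp only [Pi.sub_apply]
          rw [hIter i0 x 0, hIter i0 y 0]
          rw [zero_add]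
          rw [show ((x : lp (fun _ : ℕ => ℂ) p) : ℕ → ℂ) i0 = gFun b M (ext v) i0 from
            congrFun (Gmap_coe hb0 hb1 hpt M (ext v)) i0]
          rw [show ((y : lp (fun _ : ℕ => ℂ) p) : ℕ → ℂ) i0 = gFun b M (ext w) i0 from
            congrFun (Gmap_coe hb0 hb1 hpt M (ext w)) i0]
          ring
        have hlow : (1 : ℝ) ≤ ‖((f^[i0] x - f^[i0] y : lp (fun _ : ℕ => ℂ) p) : ℕ → ℂ) 0‖ := by
          rw [hco, norm_mul]
          have h1 : ‖α ^ i0‖ = r ^ i0 := by rw [norm_pow]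
          have h2 : ‖gFun b M (ext v) i0 - gFun b M (ext w) i0‖
              = ‖((ext v i0 : ℕ) : ℂ) - ((ext w i0 : ℕ) : ℂ)‖ * b ^ i0 := by
            rw [gFun, gFun, ← sub_mul, norm_mul, norm_pow, Complex.norm_real,
              Real.norm_of_nonneg hb0.le]
          have h3 : (1 : ℝ) ≤ ‖((ext v i0 : ℕ) : ℂ) - ((ext w i0 : ℕ) : ℂ)‖ := by
            have hne' : ((ext v i0 : ℕ) : ℤ) ≠ ((ext w i0 : ℕ) : ℤ) := by
              intro h
              exact hi0 (Fin.ext (by exact_mod_cast h))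
            have : ((ext v i0 : ℕ) : ℂ) - ((ext w i0 : ℕ) : ℂ)
                = (((ext v i0 : ℕ) : ℤ) - ((ext w i0 : ℕ) : ℤ) : ℤ) := by push_cast; ring
            rw [this]
            rw [show ‖((((ext v i0 : ℕ) : ℤ) - ((ext w i0 : ℕ) : ℤ) : ℤ) : ℂ)‖
              = |((((ext v i0 : ℕ) : ℤ) - ((ext w i0 : ℕ) : ℤ) : ℤ) : ℝ)| from
                Complex.norm_intCast _]
            rw [← Int.cast_abs]
            exact_mod_cast Int.one_le_abs (sub_ne_zero.2 hne')
          rw [h1, h2]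
          calc (1 : ℝ) ≤ (r * b) ^ i0 := one_le_pow₀ hrb
          _ = r ^ i0 * b ^ i0 := mul_pow r b i0
          _ ≤ r ^ i0 * (‖((ext v i0 : ℕ) : ℂ) - ((ext w i0 : ℕ) : ℂ)‖ * b ^ i0) := by
              rw [← mul_assoc]
              apply mul_le_mul_of_nonneg_right _ (pow_nonneg hb0.le i0)
              nlinarith [pow_nonneg (le_of_lt (lt_trans one_pos hr1)) i0,
                pow_pos (lt_trans one_pos hr1) i0]
        have hpne : p ≠ 0 := by
          intro h
          have h1 : (1 : ℝ≥0∞) ≤ p := Fact.out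
          simp [h] at h1
        have hnorm := lp.norm_apply_le_norm hpne (f^[i0] x - f^[i0] y) 0
        rw [dist_eq_norm]
        calc (1 : ℝ) / 2 < 1 := by norm_num
        _ ≤ ‖((f^[i0] x - f^[i0] y : lp (fun _ : ℕ => ℂ) p) : ℕ → ℂ) 0‖ := hlow
        _ ≤ ‖f^[i0] x - f^[i0] y‖ := hnorm
      exact le_csSup (bddAbove_sep f T.continuous hKc n (by norm_num : (0:ℝ) < 1/2))
        ⟨E, hEK, hsep, hcard⟩
    -- limsup bound
    have hlim : (Real.log (M + 1) : EReal) ≤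
        limsup (fun n : ℕ => ((Real.log (sepNum f K n (1/2)) / n : ℝ) : EReal)) atTop := by
      apply le_limsup_of_frequently_le'
      apply Frequently.mono (Eventually.frequently (eventually_ge_atTop 1))
      intro n hn
      have hn0 : (0 : ℝ) < (n : ℝ) := by exact_mod_cast hn
      have hpos : (0 : ℝ) < ((M : ℝ) + 1) ^ n := by positivity
      have hle : (((M + 1) ^ n : ℕ) : ℝ) ≤ (sepNum f K n (1/2) : ℝ) := by
        exact_mod_cast hsepnum n
      have hle' : ((M : ℝ) + 1) ^ n ≤ (sepNum f K n (1/2) : ℝ) := by push_cast at hle; linarith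
      have hspos : (0 : ℝ) < (sepNum f K n (1/2) : ℝ) := lt_of_lt_of_le hpos hle'
      have hlog : (n : ℝ) * Real.log ((M : ℝ) + 1) ≤ Real.log (sepNum f K n (1/2)) := by
        calc (n : ℝ) * Real.log ((M : ℝ) + 1) = Real.log (((M : ℝ) + 1) ^ n) := by
              rw [Real.log_pow]
        _ ≤ _ := (Real.log_le_log_iff hpos hspos).2 hle'
      have hfin : Real.log ((M : ℝ) + 1) ≤ Real.log (sepNum f K n (1/2)) / n := by
        rw [le_div_iff₀ hn0]
        linarith
      exact_mod_cast EReal.coe_le_coe_iff.2 hfin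
    refine hlim.trans ?_
    rw [entBowen]
    refine le_iSup_of_le K ?_
    refine le_iSup_of_le hKc ?_
    refine le_iSup_of_le (1/2 : ℝ) ?_
    exact le_iSup_of_le (by norm_num) le_rfl
  rw [EReal.eq_top_iff_forall_lt]
  intro y
  set M : ℕ := ⌈Real.exp y⌉₊ with hM
  have h1 : Real.exp y < (M : ℝ) + 1 := by
    have := Nat.le_ceil (Real.exp y)
    rw [← hM] at this
    linarith
  have h2 : y < Real.log (M + 1) := by
    have := Real.log_lt_log (Real.exp_pos y) h1
    rwa [Real.log_exp] at this
  calc (y : EReal) < (Real.log (M + 1) : EReal) := by exact_mod_cast h2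
  _ ≤ entBowen f := hmain M
end

section
/- Let T be a compact operator on a complex Banach space with Riesz splitting X = X_u ⊕ X_c ⊕ X_s into closed T-invariant subspaces with σ(T|_{X_u}) = {λ ∈ σ(T) : |λ| > 1}, σ(T|_{X_c}) = {λ : |λ| = 1}, σ(T|_{X_s}) = {λ : |λ| < 1}. Then every T-invariant Borel probability measure μ on X has its support contained in X_c. -/
open MeasureTheory Filter Topology

lemma aux_meas_zero {X : Type*} [MeasurableSpace X] {μ : Measure X} [IsProbabilityMeasure μ]
    {f : X → ℝ} (hf : Measurable f) (A : Set X)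
    (h : ∀ M : ℝ, μ A ≤ μ {x | M ≤ f x}) : μ A = 0 := by
  have hmeas : ∀ c : ℝ, NullMeasurableSet {x | c ≤ f x} μ :=
    fun c => (hf measurableSet_Ici).nullMeasurableSet
  have hanti : Antitone fun k : ℕ => {x | (k : ℝ) ≤ f x} := by
    intro a b hab x hx
    exact le_trans (by exact_mod_cast Nat.cast_le.mpr hab : (a:ℝ) ≤ b) hx
  have htend := tendsto_measure_iInter_atTop (μ := μ) (fun k : ℕ => hmeas _) hanti
    ⟨0, measure_ne_top μ _⟩
  have hempty : (⋂ k : ℕ, {x | (k : ℝ) ≤ f x}) = ∅ := by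
    ext x
    simp only [Set.mem_iInter, Set.mem_setOf_eq, Set.mem_empty_iff_false, iff_false, not_forall,
      not_le]
    obtain ⟨k, hk⟩ := exists_nat_gt (f x)
    exact ⟨k, hk⟩
  rw [hempty, measure_empty] at htend
  exact le_antisymm (ge_of_tendsto' htend fun k => h k) zero_le

lemma aux_pow_norm_lt_one {A : Type*} [NormedRing A] [NormedAlgebra ℂ A] [CompleteSpace A]
    (a : A) (ha : ∀ z ∈ spectrum ℂ a, ‖z‖ < 1) : ∃ n : ℕ, 0 < n ∧ ‖a ^ n‖ < 1 := by
  have hrad : spectralRadius ℂ a < 1 := by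
    rcases (spectrum ℂ a).eq_empty_or_nonempty with he | hne
    · rw [spectralRadius, he]
      simp
    · have := spectrum.spectralRadius_lt_of_forall_lt_of_nonempty hne
        (r := 1) (fun k hk => by have h := ha k hk; rw [← coe_nnnorm] at h; exact_mod_cast h)
      simpa using this
  have htend := spectrum.pow_nnnorm_pow_one_div_tendsto_nhds_spectralRadius a
  have hev : ∀ᶠ n : ℕ in atTop, (‖a ^ n‖₊ : ENNReal) ^ (1 / (n : ℝ)) < 1 :=
    htend.eventually_lt_const hrad
  obtain ⟨n, hn1, hn⟩ := ((eventually_ge_atTop 1).and hev).exists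
  refine ⟨n, hn1, ?_⟩
  by_contra hle
  push_neg at hle
  have h1 : (1 : ENNReal) ≤ (‖a ^ n‖₊ : ENNReal) := by
    exact_mod_cast hle
  have h2 := ENNReal.rpow_le_rpow h1 (by positivity : (0:ℝ) ≤ 1 / (n:ℝ))
  rw [ENNReal.one_rpow] at h2
  exact absurd (lt_of_le_of_lt h2 hn) (lt_irrefl _)

lemma aux_contracting {E : Type*} [NormedAddCommGroup E] [NormedSpace ℂ E] [CompleteSpace E]
    (a : E →L[ℂ] E) (ha : ∀ z ∈ spectrum ℂ a, ‖z‖ < 1) : ∃ n : ℕ, 0 < n ∧ ‖a ^ n‖ < 1 :=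
  aux_pow_norm_lt_one a ha

lemma aux_expanding {E : Type*} [NormedAddCommGroup E] [NormedSpace ℂ E] [CompleteSpace E]
    (a : E →L[ℂ] E) (ha : ∀ z ∈ spectrum ℂ a, 1 < ‖z‖) :
    ∃ (n : ℕ) (r : ℝ), 0 < n ∧ 0 < r ∧ r < 1 ∧ ∀ v : E, ‖v‖ ≤ r * ‖(a ^ n) v‖ := by
  have h0 : (0 : ℂ) ∉ spectrum ℂ a := fun h => by have := ha 0 h; simp at this; linarith
  obtain ⟨u, hu⟩ := spectrum.isUnit_of_zero_notMem ℂ h0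
  have hbspec : ∀ z ∈ spectrum ℂ ((↑u⁻¹ : E →L[ℂ] E)), ‖z‖ < 1 := by
    intro z hz
    have hz0 : z ≠ 0 := fun h => Units.zero_notMem_spectrum ℂ u⁻¹ (h ▸ hz)
    have hmem : ((Units.mk0 z hz0 : ℂˣ) : ℂ) ∈ spectrum ℂ ((u⁻¹ : (E →L[ℂ] E)ˣ) : E →L[ℂ] E) := hz
    have h2 := (spectrum.inv_mem_iff).mp hmem
    rw [inv_inv] at h2
    have h3 : z⁻¹ ∈ spectrum ℂ a := by
      have : ((Units.mk0 z hz0)⁻¹ : ℂˣ) = (z⁻¹ : ℂ) := rfl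
      rw [this, hu] at h2
      exact h2
    have h4 := ha _ h3
    rw [norm_inv] at h4
    have hz0' : 0 < ‖z‖ := norm_pos_iff.mpr hz0
    rw [one_lt_inv_iff₀] at h4
    exact h4.2
  obtain ⟨n, hn, hbn⟩ := aux_pow_norm_lt_one ((↑u⁻¹ : E →L[ℂ] E)) hbspec
  set b : E →L[ℂ] E := (↑u⁻¹ : E →L[ℂ] E) with hb
  have hba : b * a = 1 := by rw [hb, ← hu]; exact u.inv_mul
  have hab : a * b = 1 := by rw [hb, ← hu]; exact u.mul_inv
  have hcomm : Commute b a := by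
    unfold Commute SemiconjBy
    rw [hba, hab]
  have hbnan : (b ^ n) * (a ^ n) = 1 := by
    rw [← hcomm.mul_pow, hba, one_pow]
  have hkey : ∀ v : E, ‖v‖ ≤ ‖b ^ n‖ * ‖(a ^ n) v‖ := by
    intro v
    have : (b ^ n) ((a ^ n) v) = v := by
      rw [← ContinuousLinearMap.mul_apply, hbnan, ContinuousLinearMap.one_apply]
    calc ‖v‖ = ‖(b ^ n) ((a ^ n) v)‖ := by rw [this]
      _ ≤ ‖b ^ n‖ * ‖(a ^ n) v‖ := (b ^ n).le_opNorm _
  refine ⟨n, max ‖b ^ n‖ (1/2), hn, lt_max_of_lt_right (by norm_num), max_lt hbn (by norm_num),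
    fun v => ?_⟩
  exact (hkey v).trans (mul_le_mul_of_nonneg_right (le_max_left _ _) (norm_nonneg _))

set_option maxHeartbeats 2000000 in
theorem support_of_invariant_measure_in_central_subspace
    {X : Type*} [NormedAddCommGroup X] [NormedSpace ℂ X] [CompleteSpace X]
    [MeasurableSpace X] [BorelSpace X]
    (T : X →L[ℂ] X) (hT : IsCompactOperator T)
    (Xu Xc Xs : Submodule ℂ X)
    (hu : IsClosed (Xu : Set X)) (hc : IsClosed (Xc : Set X)) (hs : IsClosed (Xs : Set X))
    (hiu : ∀ x ∈ Xu, T x ∈ Xu) (hic : ∀ x ∈ Xc, T x ∈ Xc) (his : ∀ x ∈ Xs, T x ∈ Xs)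
    (hdirect : ∀ x : X, ∃! p : Xu × Xc × Xs, (p.1 : X) + (p.2.1 : X) + (p.2.2 : X) = x)
    (Tu : Xu →L[ℂ] Xu) (hTu : ∀ v : Xu, (Tu v : X) = T v)
    (Tc : Xc →L[ℂ] Xc) (hTc : ∀ v : Xc, (Tc v : X) = T v)
    (Ts : Xs →L[ℂ] Xs) (hTs : ∀ v : Xs, (Ts v : X) = T v)
    (hσu : spectrum ℂ Tu = {μ ∈ spectrum ℂ T | 1 < ‖μ‖})
    (hσc : spectrum ℂ Tc = {μ ∈ spectrum ℂ T | ‖μ‖ = 1})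
    (hσs : spectrum ℂ Ts = {μ ∈ spectrum ℂ T | ‖μ‖ < 1})
    (μ : Measure X) [IsProbabilityMeasure μ]
    (hinv : MeasurePreserving (fun x => T x) μ μ) :
    {x : X | ∀ U ∈ nhds x, 0 < μ U} ⊆ (Xc : Set X) := by
  classical
  haveI : CompleteSpace Xu := hu.completeSpace_coe
  haveI : CompleteSpace Xc := hc.completeSpace_coe
  haveI : CompleteSpace Xs := hs.completeSpace_coe
  -- the projection map
  set π : X → Xu × Xc × Xs := fun x => (hdirect x).exists.choose with hπdef
  have hπ_spec : ∀ x, ((π x).1 : X) + ((π x).2.1 : X) + ((π x).2.2 : X) = x :=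
    fun x => (hdirect x).exists.choose_spec
  have hπ_unique : ∀ (x) (p : Xu × Xc × Xs),
      ((p.1 : X) + (p.2.1 : X) + (p.2.2 : X) = x) → π x = p := by
    intro x p hp
    exact (hdirect x).unique (hπ_spec x) hp
  -- linearity
  let L : X →ₗ[ℂ] Xu × Xc × Xs :=
    { toFun := π
      map_add' := by
        intro x y
        apply hπ_unique
        show ((π x + π y).1 : X) + ((π x + π y).2.1 : X) + ((π x + π y).2.2 : X) = x + y
        simp only [Prod.fst_add, Prod.snd_add, Submodule.coe_add]
        conv_rhs => rw [← hπ_spec x, ← hπ_spec y]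
        abel
      map_smul' := by
        intro c x
        apply hπ_unique
        show ((c • π x).1 : X) + ((c • π x).2.1 : X) + ((c • π x).2.2 : X) = c • x
        simp only [Prod.smul_fst, Prod.smul_snd, Submodule.coe_smul]
        conv_rhs => rw [← hπ_spec x, smul_add, smul_add] }
  -- continuity via the closed graph theorem
  have hπcont : Continuous π := by
    have : Continuous L := by
      apply LinearMap.continuous_of_seq_closed_graph
      intro v x y hx hy
      refine (hπ_unique x y ?_).symm
      have hy1 : Tendsto (fun n => ((π (v n)).1 : X)) atTop (𝓝 (y.1 : X)) :=
        (continuous_subtype_val.tendsto _).comp ((continuous_fst.tendsto _).comp hy)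
      have hy2 : Tendsto (fun n => ((π (v n)).2.1 : X)) atTop (𝓝 (y.2.1 : X)) :=
        (continuous_subtype_val.tendsto _).comp ((continuous_fst.tendsto _).comp
          ((continuous_snd.tendsto _).comp hy))
      have hy3 : Tendsto (fun n => ((π (v n)).2.2 : X)) atTop (𝓝 (y.2.2 : X)) :=
        (continuous_subtype_val.tendsto _).comp ((continuous_snd.tendsto _).comp
          ((continuous_snd.tendsto _).comp hy))
      have h1 := (hy1.add hy2).add hy3
      have h2 : (fun n => ((π (v n)).1 : X) + ((π (v n)).2.1 : X) + ((π (v n)).2.2 : X)) = v :=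
        funext fun n => hπ_spec (v n)
      rw [h2] at h1
      exact tendsto_nhds_unique h1 hx
    exact this
  -- commutation with T
  have hcomm : ∀ x, π (T x) = (Tu (π x).1, Tc (π x).2.1, Ts (π x).2.2) := by
    intro x
    apply hπ_unique
    show ((Tu (π x).1 : X)) + ((Tc (π x).2.1 : X)) + ((Ts (π x).2.2 : X)) = T x
    rw [hTu, hTc, hTs, ← map_add, ← map_add, hπ_spec x]
  -- iterated commutation
  have hiter : ∀ (m : ℕ) (x : X), π ((fun y => T y)^[m] x) =
      ((Tu ^ m) (π x).1, (Tc ^ m) (π x).2.1, (Ts ^ m) (π x).2.2) := by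
    intro m
    induction m with
    | zero =>
      intro x
      simp only [Function.iterate_zero, id_eq, pow_zero, ContinuousLinearMap.one_apply]
    | succ m ih =>
      intro x
      rw [Function.iterate_succ_apply', hcomm, ih]
      simp only [Prod.mk.injEq]
      refine ⟨?_, ?_, ?_⟩ <;>
        rw [pow_succ', ContinuousLinearMap.mul_apply]
  -- spectra facts
  have hspecu : ∀ z ∈ spectrum ℂ Tu, 1 < ‖z‖ := by
    intro z hz; rw [hσu] at hz; exact hz.2
  have hspecs : ∀ z ∈ spectrum ℂ Ts, ‖z‖ < 1 := by
    intro z hz; rw [hσs] at hz; exact hz.2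
  -- measurability of the norm functions
  have hfu_cont : Continuous (fun x => ‖(π x).1‖) :=
    (continuous_subtype_val.comp (continuous_fst.comp hπcont)).norm
  have hfs_cont : Continuous (fun x => ‖(π x).2.2‖) :=
    (continuous_subtype_val.comp (continuous_snd.comp (continuous_snd.comp hπcont))).norm
  -- the unstable part vanishes a.e.
  have hu0 : μ {x | (π x).1 ≠ 0} = 0 := by
    obtain ⟨n, r, hn, hr0, hr1, hexp⟩ := aux_expanding Tu hspecu
    have hgrow : ∀ (k : ℕ) (v : Xu), ‖v‖ ≤ r ^ k * ‖(Tu ^ (n * k)) v‖ := by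
      intro k
      induction k with
      | zero => intro v; simp
      | succ k ih =>
        intro v
        calc ‖v‖ ≤ r * ‖(Tu ^ n) v‖ := hexp v
          _ ≤ r * (r ^ k * ‖(Tu ^ (n * k)) ((Tu ^ n) v)‖) := by
              have := ih ((Tu ^ n) v)
              nlinarith
          _ = r ^ (k + 1) * ‖(Tu ^ (n * (k + 1))) v‖ := by
              rw [← ContinuousLinearMap.mul_apply, ← pow_add]
              ring_nf
    have hcover : {x | (π x).1 ≠ 0} ⊆ ⋃ j : ℕ, {x | 1 / ((j : ℝ) + 1) ≤ ‖(π x).1‖} := by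
      intro x hx
      have hpos : 0 < ‖(π x).1‖ := norm_pos_iff.mpr hx
      obtain ⟨j, hj⟩ := exists_nat_one_div_lt hpos
      exact Set.mem_iUnion.mpr ⟨j, le_of_lt hj⟩
    refine measure_mono_null hcover (measure_iUnion_null fun j => ?_)
    set ε : ℝ := 1 / ((j : ℝ) + 1) with hεdef
    have hεpos : 0 < ε := by positivity
    apply aux_meas_zero hfu_cont.measurable
    intro M
    rcases le_or_gt M 0 with hM | hM
    · exact measure_mono fun x hx => le_trans hM (norm_nonneg _)
    · obtain ⟨k, hk⟩ := exists_pow_lt_of_lt_one (div_pos hεpos hM) hr1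
      set m := n * k with hmdef
      have hsub : {x | ε ≤ ‖(π x).1‖} ⊆ (fun y => T y)^[m] ⁻¹' {x | M ≤ ‖(π x).1‖} := by
        intro x hx
        simp only [Set.mem_preimage, Set.mem_setOf_eq] at hx ⊢
        rw [hiter m x]
        have h2 := hgrow k (π x).1
        have hrk : 0 < r ^ k := pow_pos hr0 k
        have h3 : r ^ k * M < ε := (lt_div_iff₀ hM).mp hk
        have h4 : r ^ k * M < r ^ k * ‖(Tu ^ m) (π x).1‖ :=
          lt_of_lt_of_le h3 (le_trans hx h2)
        exact le_of_lt ((mul_lt_mul_iff_right₀ hrk).mp h4)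
      calc μ {x | ε ≤ ‖(π x).1‖} ≤ μ ((fun y => T y)^[m] ⁻¹' {x | M ≤ ‖(π x).1‖}) :=
            measure_mono hsub
        _ = μ {x | M ≤ ‖(π x).1‖} := (hinv.iterate m).measure_preimage
            ((hfu_cont.measurable measurableSet_Ici).nullMeasurableSet)
  -- the stable part vanishes a.e.
  have hs0 : μ {x | (π x).2.2 ≠ 0} = 0 := by
    obtain ⟨n, hn, hsn⟩ := aux_contracting Ts hspecs
    set r : ℝ := max ‖Ts ^ n‖ (1/2) with hrdef
    have hr0 : 0 < r := lt_max_of_lt_right (by norm_num)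
    have hr1 : r < 1 := max_lt hsn (by norm_num)
    have hcontr : ∀ (k : ℕ) (v : Xs), ‖(Ts ^ (n * k)) v‖ ≤ r ^ k * ‖v‖ := by
      intro k
      induction k with
      | zero => intro v; simp
      | succ k ih =>
        intro v
        have h1 : (Ts ^ (n * (k + 1))) v = (Ts ^ (n * k)) ((Ts ^ n) v) := by
          rw [← ContinuousLinearMap.mul_apply, ← pow_add]
          ring_nf
        rw [h1]
        calc ‖(Ts ^ (n * k)) ((Ts ^ n) v)‖ ≤ r ^ k * ‖(Ts ^ n) v‖ := ih _
          _ ≤ r ^ k * (r * ‖v‖) := by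
              have h2 : ‖(Ts ^ n) v‖ ≤ r * ‖v‖ :=
                le_trans ((Ts ^ n).le_opNorm v)
                  (mul_le_mul_of_nonneg_right (le_max_left _ _) (norm_nonneg _))
              exact mul_le_mul_of_nonneg_left h2 (pow_nonneg hr0.le k)
          _ = r ^ (k + 1) * ‖v‖ := by ring
    have hcover : {x | (π x).2.2 ≠ 0} ⊆ ⋃ j : ℕ, {x | 1 / ((j : ℝ) + 1) ≤ ‖(π x).2.2‖} := by
      intro x hx
      have hpos : 0 < ‖(π x).2.2‖ := norm_pos_iff.mpr hx
      obtain ⟨j, hj⟩ := exists_nat_one_div_lt hpos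
      exact Set.mem_iUnion.mpr ⟨j, le_of_lt hj⟩
    refine measure_mono_null hcover (measure_iUnion_null fun j => ?_)
    set ε : ℝ := 1 / ((j : ℝ) + 1) with hεdef
    have hεpos : 0 < ε := by positivity
    apply aux_meas_zero hfs_cont.measurable
    intro M
    rcases le_or_gt M 0 with hM | hM
    · exact measure_mono fun x hx => le_trans hM (norm_nonneg _)
    · obtain ⟨k, hk⟩ := exists_pow_lt_of_lt_one (div_pos hεpos hM) hr1
      set m := n * k with hmdef
      have heq : μ {x | ε ≤ ‖(π x).2.2‖} =
          μ ((fun y => T y)^[m] ⁻¹' {x | ε ≤ ‖(π x).2.2‖}) :=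
        ((hinv.iterate m).measure_preimage
          ((hfs_cont.measurable measurableSet_Ici).nullMeasurableSet)).symm
      rw [heq]
      refine measure_mono fun x hx => ?_
      simp only [Set.mem_preimage, Set.mem_setOf_eq] at hx ⊢
      rw [hiter m x] at hx
      have h2 := hcontr k (π x).2.2
      have hrk : 0 < r ^ k := pow_pos hr0 k
      have h3 : r ^ k * M < ε := (lt_div_iff₀ hM).mp hk
      nlinarith [norm_nonneg (π x).2.2]
  -- conclusion
  intro x hx
  by_contra hxc
  have hopen : ((Xc : Set X))ᶜ ∈ nhds x := hc.isOpen_compl.mem_nhds hxc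
  have hpos := hx _ hopen
  have hsub : ((Xc : Set X))ᶜ ⊆ {x | (π x).1 ≠ 0} ∪ {x | (π x).2.2 ≠ 0} := by
    intro y hy
    by_contra hcon
    simp only [Set.mem_union, Set.mem_setOf_eq, not_or, not_not] at hcon
    apply hy
    have hspec := hπ_spec y
    rw [hcon.1, hcon.2] at hspec
    simp only [Submodule.coe_zero, zero_add, add_zero] at hspec
    rw [← hspec]
    exact (π y).2.1.2
  have hzero : μ (((Xc : Set X))ᶜ) = 0 :=
    measure_mono_null hsub (measure_union_null hu0 hs0)
  rw [hzero] at hpos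
  exact lt_irrefl 0 hpos
end

section
/- For every C > 0 there exists a compact operator T on ℓ^2(ℕ) with Bowen topological entropy h_top(T) > C; in particular compact operators can have arbitrarily large (finite) positive entropy despite never being hypercyclic. -/
open Filter Topology

noncomputable section AuxE

abbrev Hs : Type := lp (fun _ : ℕ => ℂ) 2

def ee : Hs := lp.single 2 0 1

lemma ee_apply_zero : (ee : ∀ _ : ℕ, ℂ) 0 = 1 := lp.single_apply_self 2 0 1

lemma ee_apply_one : (ee : ∀ _ : ℕ, ℂ) 1 = 0 := lp.single_apply_ne 2 0 1 (by norm_num)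

lemma norm_ee : ‖ee‖ = 1 := by
  have := lp.norm_single (p := 2) (E := fun _ : ℕ => ℂ) (by norm_num) 0 (1 : ℂ)
  simpa [ee] using this

lemma coord_smul_ee (c : ℂ) : ((c • ee : Hs) : ∀ _ : ℕ, ℂ) 0 = c := by
  rw [lp.coeFn_smul]
  simp [ee_apply_zero]

lemma coord_smul_ee_one (c : ℂ) : ((c • ee : Hs) : ∀ _ : ℕ, ℂ) 1 = 0 := by
  rw [lp.coeFn_smul]
  simp [ee_apply_one]

lemma norm_smul_ee (c : ℂ) : ‖(c • ee : Hs)‖ = ‖c‖ := by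
  rw [norm_smul, norm_ee, mul_one]

def TT (L : ℝ) : Hs →L[ℂ] Hs :=
  LinearMap.mkContinuous
    { toFun := fun x => ((L : ℂ) * x 0) • ee
      map_add' := fun x y => by
        show ((L : ℂ) * (↑(x + y) : ∀ _ : ℕ, ℂ) 0) • ee = _
        have h : (↑(x + y) : ∀ _ : ℕ, ℂ) 0 = x 0 + y 0 := by rw [lp.coeFn_add]; rfl
        rw [h, mul_add, add_smul]
      map_smul' := fun c x => by
        show ((L : ℂ) * (↑(c • x) : ∀ _ : ℕ, ℂ) 0) • ee = c • (((L : ℂ) * x 0) • ee)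
        have h : (↑(c • x) : ∀ _ : ℕ, ℂ) 0 = c * x 0 := by rw [lp.coeFn_smul]; rfl
        rw [h, smul_smul]
        congr 1
        ring }
    |L|
    (fun x => by
      simp only [LinearMap.coe_mk, AddHom.coe_mk]
      rw [norm_smul, norm_ee, mul_one]
      calc ‖(L : ℂ) * x 0‖ = |L| * ‖x 0‖ := by
            rw [norm_mul, Complex.norm_real, Real.norm_eq_abs]
        _ ≤ |L| * ‖x‖ := by
            exact mul_le_mul_of_nonneg_left (lp.norm_apply_le_norm (by norm_num) x 0)
              (abs_nonneg L))

lemma TT_apply (L : ℝ) (x : Hs) : TT L x = ((L : ℂ) * x 0) • ee := rfl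

lemma iter_smul (L : ℝ) : ∀ (i : ℕ) (c : ℂ),
    (fun x : Hs => TT L x)^[i] (c • ee) = (((L : ℂ)) ^ i * c) • ee
  | 0, c => by simp
  | (i + 1), c => by
    rw [Function.iterate_succ_apply]
    have h1 : TT L (c • ee) = ((L : ℂ) * c) • ee := by
      rw [TT_apply, coord_smul_ee]
    rw [h1, iter_smul L i]
    congr 1
    ring

lemma iter_apply (L : ℝ) (i : ℕ) (x : Hs) :
    (fun x : Hs => TT L x)^[i + 1] x = ((L : ℂ) ^ (i + 1) * x 0) • ee := by
  rw [Function.iterate_succ_apply]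
  have h1 : TT L x = ((L : ℂ) * x 0) • ee := rfl
  rw [h1, iter_smul L i]
  congr 1
  ring

end AuxE

noncomputable section CountE

lemma floor_div_eq_imp {a b h : ℝ} (hh : 0 < h) (hf : ⌊a / h⌋ = ⌊b / h⌋) : |a - b| < h := by
  have h1 := Int.floor_le (a / h)
  have h2 := Int.lt_floor_add_one (a / h)
  have h3 := Int.floor_le (b / h)
  have h4 := Int.lt_floor_add_one (b / h)
  rw [hf] at h1 h2
  have key : ∀ u v : ℝ, u / h - v / h < 1 → u - v < h := by
    intro u v huv
    have : (u - v) / h < 1 := by rw [sub_div]; exact huv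
    exact (div_lt_one hh).1 this
  rw [abs_sub_lt_iff]
  exact ⟨key a b (by linarith), key b a (by linarith)⟩

lemma sep_card_le {L : ℝ} (hL : 1 ≤ L) {K : Set Hs} {ε : ℝ} (hε : 0 < ε)
    {n : ℕ} (hn : 1 ≤ n) {t : Finset Hs}
    (ht : K ⊆ ⋃ y ∈ (t : Set Hs), Metric.ball y (ε / 2))
    {R : ℝ} (hR0 : 0 ≤ R) (hR : ∀ x ∈ K, ‖x‖ ≤ R)
    {h : ℝ} (hh : 0 < h) (hhε : L ^ (n - 1) * (2 * h) ≤ ε)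
    {E : Finset Hs} (hE : ↑E ⊆ K) (hsep : IsSep (fun x => TT L x) n ε E) :
    E.card ≤ t.card * (Finset.Icc (⌊-R / h⌋) ⌊R / h⌋).card ^ 2 := by
  classical
  set G : Finset ℤ := Finset.Icc (⌊-R / h⌋) ⌊R / h⌋ with hG
  have hnet : ∀ x : Hs, x ∈ K → ∃ y ∈ t, dist x y < ε / 2 := by
    intro x hx
    obtain ⟨y, hy1, hy2⟩ := Set.mem_iUnion₂.1 (ht hx)
    exact ⟨y, hy1, Metric.mem_ball.1 hy2⟩
  set net : Hs → Hs := fun x => if hx : ∃ y ∈ t, dist x y < ε / 2 then hx.choose else 0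
    with hnetdef
  have hnet_mem : ∀ x ∈ K, net x ∈ t ∧ dist x (net x) < ε / 2 := by
    intro x hx
    have hx' : ∃ y ∈ t, dist x y < ε / 2 := hnet x hx
    simp only [hnetdef, dif_pos hx']
    exact ⟨hx'.choose_spec.1, hx'.choose_spec.2⟩
  set F : Hs → Hs × (ℤ × ℤ) :=
    fun x => (net x, (⌊(x 0).re / h⌋, ⌊(x 0).im / h⌋)) with hF
  have hcoordR : ∀ x ∈ K, |(x 0).re| ≤ R ∧ |(x 0).im| ≤ R := by
    intro x hx
    have h1 : ‖x 0‖ ≤ R := le_trans (lp.norm_apply_le_norm (by norm_num) x 0) (hR x hx)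
    exact ⟨le_trans (Complex.abs_re_le_norm _) h1, le_trans (Complex.abs_im_le_norm _) h1⟩
  have hmem : ∀ x ∈ E, F x ∈ t ×ˢ (G ×ˢ G) := by
    intro x hx
    have hxK := hE hx
    obtain ⟨hre, him⟩ := hcoordR x hxK
    have hfloor : ∀ a : ℝ, |a| ≤ R → ⌊a / h⌋ ∈ G := by
      intro a ha
      rw [hG, Finset.mem_Icc]
      rw [abs_le] at ha
      constructor
      · exact Int.floor_mono (by apply div_le_div_of_nonneg_right ha.1 hh.le)
      · exact Int.floor_mono (by apply div_le_div_of_nonneg_right ha.2 hh.le)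
    rw [Finset.mem_product, Finset.mem_product]
    exact ⟨(hnet_mem x hxK).1, hfloor _ hre, hfloor _ him⟩
  have hinj : Set.InjOn F ↑E := by
    intro x hx y hy hFxy
    by_contra hne
    obtain ⟨i, hi, hdist⟩ := hsep x hx y hy hne
    have hFx1 : net x = net y := congrArg Prod.fst hFxy
    have hFre : ⌊(x 0).re / h⌋ = ⌊(y 0).re / h⌋ := congrArg (fun p => p.2.1) hFxy
    have hFim : ⌊(x 0).im / h⌋ = ⌊(y 0).im / h⌋ := congrArg (fun p => p.2.2) hFxy
    match i, hi with
    | 0, _ =>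
      simp only [Function.iterate_zero, id_eq] at hdist
      have d1 := (hnet_mem x (hE hx)).2
      have d2 := (hnet_mem y (hE hy)).2
      rw [hFx1] at d1
      have tri : dist x y ≤ dist x (net y) + dist (net y) y := dist_triangle _ _ _
      rw [dist_comm (net y) y] at tri
      linarith
    | (j + 1), hi =>
      rw [iter_apply, iter_apply] at hdist
      rw [dist_eq_norm, ← sub_smul, norm_smul_ee, ← mul_sub] at hdist
      have hre := floor_div_eq_imp hh hFre
      have him := floor_div_eq_imp hh hFim
      have habs : ‖x 0 - y 0‖ < 2 * h := by
        calc ‖x 0 - y 0‖ ≤ |(x 0 - y 0).re| + |(x 0 - y 0).im| :=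
              Complex.norm_le_abs_re_add_abs_im _
          _ = |(x 0).re - (y 0).re| + |(x 0).im - (y 0).im| := by
              rw [Complex.sub_re, Complex.sub_im]
          _ < h + h := by exact add_lt_add hre him
          _ = 2 * h := by ring
      have hLpow : ‖((L : ℂ)) ^ (j + 1)‖ = L ^ (j + 1) := by
        rw [norm_pow, Complex.norm_real, Real.norm_eq_abs, abs_of_nonneg (by linarith)]
      have hpowle : L ^ (j + 1) ≤ L ^ (n - 1) := by
        apply pow_le_pow_right₀ hL
        omega
      have : ‖(L : ℂ) ^ (j + 1) * (x 0 - y 0)‖ < ε := by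
        rw [norm_mul, hLpow]
        calc L ^ (j + 1) * ‖x 0 - y 0‖ ≤ L ^ (n - 1) * ‖x 0 - y 0‖ := by
              apply mul_le_mul_of_nonneg_right hpowle (norm_nonneg _)
          _ < L ^ (n - 1) * (2 * h) :=
              mul_lt_mul_of_pos_left habs (by positivity)
          _ ≤ ε := hhε
      linarith
  calc E.card ≤ (t ×ˢ (G ×ˢ G)).card := Finset.card_le_card_of_injOn F hmem hinj
    _ = t.card * G.card ^ 2 := by
        rw [Finset.card_product, Finset.card_product, sq]

lemma zero_mem_sepSet (f : Hs → Hs) (K : Set Hs) (n : ℕ) (ε : ℝ) :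
    0 ∈ {m : ℕ | ∃ E : Finset Hs, ↑E ⊆ K ∧ IsSep f n ε E ∧ E.card = m} := by
  refine ⟨∅, by simp, ?_, rfl⟩
  intro x hx
  simp at hx

end CountE

noncomputable section MainAux

lemma sepNum_upper {L : ℝ} (hL : 1 ≤ L) {K : Set Hs} (hK : IsCompact K) {ε : ℝ} (hε : 0 < ε) :
    ∃ P : ℝ, 1 ≤ P ∧ ∀ n : ℕ, 1 ≤ n →
      ((sepNum (fun x => TT L x) K n ε : ℝ) ≤ P * L ^ (2 * n) ∧
        BddAbove {m : ℕ | ∃ E : Finset Hs, ↑E ⊆ K ∧ IsSep (fun x => TT L x) n ε E ∧ E.card = m}) := by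
  classical
  obtain ⟨t, -, htfin, htcov⟩ := hK.finite_cover_balls (half_pos hε)
  set t' : Finset Hs := htfin.toFinset with ht'
  have htcov' : K ⊆ ⋃ y ∈ (t' : Set Hs), Metric.ball y (ε / 2) := by
    rwa [ht', Set.Finite.coe_toFinset]
  obtain ⟨R, hR⟩ := hK.isBounded.exists_norm_le
  set R' : ℝ := |R| with hR'
  have hR'0 : 0 ≤ R' := abs_nonneg R
  have hR'le : ∀ x ∈ K, ‖x‖ ≤ R' := fun x hx => (hR x hx).trans (le_abs_self R)
  set A : ℝ := (t'.card : ℝ) + 1 with hA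
  set c : ℝ := 4 * R' / ε + 2 with hc
  have hA1 : 1 ≤ A := by
    rw [hA]
    have := Nat.cast_nonneg (α := ℝ) t'.card
    linarith
  have hc1 : 1 ≤ c := by
    rw [hc]
    have : 0 ≤ 4 * R' / ε := by positivity
    linarith
  refine ⟨A * c ^ 2, by nlinarith, ?_⟩
  intro n hn
  have hLpos : (0:ℝ) < L := lt_of_lt_of_le one_pos hL
  have hLp : (0:ℝ) < L ^ (n - 1) := pow_pos hLpos _
  set h : ℝ := ε / (2 * L ^ (n - 1)) with hhdef
  have hh : 0 < h := by positivity
  have hhε : L ^ (n - 1) * (2 * h) ≤ ε := by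
    apply le_of_eq
    rw [hhdef]
    field_simp
  set G : Finset ℤ := Finset.Icc (⌊-R' / h⌋) ⌊R' / h⌋ with hG
  have hcard : ∀ E : Finset Hs, ↑E ⊆ K → IsSep (fun x => TT L x) n ε E →
      E.card ≤ t'.card * G.card ^ 2 := fun E hE hsep =>
    sep_card_le hL hε hn htcov' hR'0 hR'le hh hhε hE hsep
  have hbdd : BddAbove {m : ℕ | ∃ E : Finset Hs, ↑E ⊆ K ∧
      IsSep (fun x => TT L x) n ε E ∧ E.card = m} := by
    refine ⟨t'.card * G.card ^ 2, ?_⟩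
    rintro m ⟨E, h1, h2, rfl⟩
    exact hcard E h1 h2
  refine ⟨?_, hbdd⟩
  have hsep_le : sepNum (fun x => TT L x) K n ε ≤ t'.card * G.card ^ 2 := by
    refine csSup_le ⟨0, zero_mem_sepSet _ _ _ _⟩ ?_
    rintro m ⟨E, h1, h2, rfl⟩
    exact hcard E h1 h2
  have hfl : ⌊-R' / h⌋ ≤ ⌊R' / h⌋ := by
    apply Int.floor_mono
    apply div_le_div_of_nonneg_right _ hh.le
    linarith
  have hGcard : (G.card : ℝ) ≤ 2 * (R' / h) + 2 := by
    have hz : (0:ℤ) ≤ ⌊R' / h⌋ + 1 - ⌊-R' / h⌋ := by omega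
    have hcast : ((⌊R' / h⌋ + 1 - ⌊-R' / h⌋).toNat : ℝ) = ((⌊R' / h⌋ : ℝ) + 1 - (⌊-R' / h⌋ : ℝ)) := by
      have hzz : (((⌊R' / h⌋ + 1 - ⌊-R' / h⌋).toNat : ℤ)) = ⌊R' / h⌋ + 1 - ⌊-R' / h⌋ :=
        Int.toNat_of_nonneg hz
      calc ((⌊R' / h⌋ + 1 - ⌊-R' / h⌋).toNat : ℝ)
          = (((⌊R' / h⌋ + 1 - ⌊-R' / h⌋).toNat : ℤ) : ℝ) := by norm_cast
        _ = ((⌊R' / h⌋ + 1 - ⌊-R' / h⌋ : ℤ) : ℝ) := by rw [hzz]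
        _ = ((⌊R' / h⌋ : ℝ) + 1 - (⌊-R' / h⌋ : ℝ)) := by push_cast; ring
    rw [hG, Int.card_Icc, hcast]
    have l1 : (⌊R' / h⌋ : ℝ) ≤ R' / h := Int.floor_le _
    have l2 : -R' / h - 1 < (⌊-R' / h⌋ : ℝ) := Int.sub_one_lt_floor _
    have l3 : (-R' / h : ℝ) = -(R' / h) := by ring
    linarith
  have hone_le_pow : (1:ℝ) ≤ L ^ (n - 1) := by
    calc (1:ℝ) = 1 ^ (n-1) := (one_pow _).symm
      _ ≤ L ^ (n - 1) := pow_le_pow_left₀ (by norm_num) hL _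
  have hGc : (G.card : ℝ) ≤ c * L ^ (n - 1) := by
    have hRh : R' / h = 2 * R' * L ^ (n - 1) / ε := by
      rw [hhdef]; field_simp
    rw [hRh] at hGcard
    rw [hc]
    have e : 2 * (2 * R' * L ^ (n - 1) / ε) + 2 = (4 * R' / ε) * L ^ (n - 1) + 2 := by ring
    have e2 : (4 * R' / ε + 2) * L ^ (n - 1)
        = (4 * R' / ε) * L ^ (n - 1) + 2 * L ^ (n - 1) := by ring
    rw [e2]
    rw [e] at hGcard
    linarith
  calc ((sepNum (fun x => TT L x) K n ε : ℕ) : ℝ)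
      ≤ ((t'.card * G.card ^ 2 : ℕ) : ℝ) := by exact_mod_cast hsep_le
    _ = (t'.card : ℝ) * (G.card : ℝ) ^ 2 := by push_cast; ring
    _ ≤ A * (c * L ^ (n - 1)) ^ 2 := by
        apply mul_le_mul (by rw [hA]; linarith)
          (pow_le_pow_left₀ (by positivity) hGc 2) (by positivity) (by positivity)
    _ = A * c ^ 2 * L ^ ((n-1) * 2) := by rw [mul_pow, ← pow_mul]; ring
    _ ≤ A * c ^ 2 * L ^ (2 * n) := by
        apply mul_le_mul_of_nonneg_left (pow_le_pow_right₀ hL (by omega)) (by positivity)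

lemma limsup_le_upper {L : ℝ} (hL : 1 ≤ L) {K : Set Hs} (hK : IsCompact K) {ε : ℝ} (hε : 0 < ε) :
    limsup (fun n : ℕ => ((Real.log (sepNum (fun x => TT L x) K n ε) / n : ℝ) : EReal)) atTop
      ≤ ((2 * Real.log L + 1 : ℝ) : EReal) := by
  obtain ⟨P, hP1, hP⟩ := sepNum_upper hL hK hε
  refine Filter.limsup_le_of_le (by isBoundedDefault) ?_
  have hlogP : 0 ≤ Real.log P := Real.log_nonneg hP1
  have hlogL : 0 ≤ Real.log L := Real.log_nonneg hL
  filter_upwards [Filter.eventually_ge_atTop (max 1 (⌈Real.log P⌉₊ + 1))] with n hn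
  have hn1 : 1 ≤ n := le_trans (le_max_left _ _) hn
  have hnP : Real.log P ≤ (n : ℝ) := by
    have h1 : ⌈Real.log P⌉₊ ≤ n := le_trans (le_trans (Nat.le_succ _) (le_max_right _ _)) hn
    exact le_trans (Nat.le_ceil _) (by exact_mod_cast h1)
  have hnpos : (0:ℝ) < n := by exact_mod_cast hn1
  obtain ⟨hbound, -⟩ := hP n hn1
  have hlog : Real.log (sepNum (fun x => TT L x) K n ε) ≤ Real.log P + (2 * n) * Real.log L := by
    rcases Nat.eq_zero_or_pos (sepNum (fun x => TT L x) K n ε) with h0 | hpos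
    · rw [h0]
      simp only [Nat.cast_zero, Real.log_zero]
      have : 0 ≤ (2 * (n:ℝ)) * Real.log L := mul_nonneg (by positivity) hlogL
      linarith
    · calc Real.log (sepNum (fun x => TT L x) K n ε)
          ≤ Real.log (P * L ^ (2 * n)) := Real.log_le_log (by exact_mod_cast hpos) hbound
        _ = Real.log P + ((2 * n : ℕ) : ℝ) * Real.log L := by
            rw [Real.log_mul (by positivity) (by positivity), Real.log_pow]
        _ = Real.log P + (2 * n) * Real.log L := by push_cast; ring
  have hfin : Real.log (sepNum (fun x => TT L x) K n ε) / n ≤ 2 * Real.log L + 1 := by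
    rw [div_le_iff₀ hnpos]
    nlinarith [hlog, hnP, hlogL, hnpos]
  exact EReal.coe_le_coe_iff.2 hfin

def Kseg : Set Hs := (fun r : ℝ => ((r : ℂ)) • ee) '' Set.Icc (0:ℝ) 1

lemma Kseg_compact : IsCompact Kseg :=
  isCompact_Icc.image (Continuous.smul Complex.continuous_ofReal continuous_const)

lemma sepNum_lower {L : ℝ} (hL : 1 < L) {n : ℕ} (hn : 1 ≤ n) :
    L ^ (n - 1) / 2 ≤ (sepNum (fun x => TT L x) Kseg n 1 : ℝ) := by
  classical
  have hLpos : (0:ℝ) < L := by linarith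
  have hLp : (0:ℝ) < L ^ (n - 1) := pow_pos hLpos _
  set δ : ℝ := 2 / L ^ (n - 1) with hδ
  have hδpos : 0 < δ := by positivity
  set N : ℕ := ⌊L ^ (n - 1) / 2⌋₊ + 1 with hN
  set pt : ℕ → Hs := fun k => (((k : ℝ) * δ : ℝ) : ℂ) • ee with hpt
  set E : Finset Hs := (Finset.range N).image pt with hE
  have hptinj : Set.InjOn pt ↑(Finset.range N) := by
    intro k _ l _ hkl
    have h0 : (((k : ℝ) * δ : ℝ) : ℂ) = (((l : ℝ) * δ : ℝ) : ℂ) := by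
      have h1 := congrArg (fun z : Hs => (z : ∀ _ : ℕ, ℂ) 0) hkl
      simpa [hpt, coord_smul_ee] using h1
    have h1 : (k : ℝ) * δ = (l : ℝ) * δ := by exact_mod_cast h0
    have h2 : (k : ℝ) = l := mul_right_cancel₀ (ne_of_gt hδpos) h1
    exact_mod_cast h2
  have hcard : E.card = N := by
    rw [hE, Finset.card_image_of_injOn hptinj, Finset.card_range]
  have hsub : ↑E ⊆ Kseg := by
    intro x hx
    obtain ⟨k, hk, rfl⟩ := Finset.mem_image.1 (by exact_mod_cast hx)
    refine ⟨(k : ℝ) * δ, ⟨by positivity, ?_⟩, rfl⟩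
    have hk' : (k : ℝ) ≤ (⌊L ^ (n - 1) / 2⌋₊ : ℝ) := by
      have h1 := Finset.mem_range.1 hk
      exact_mod_cast Nat.lt_succ_iff.1 h1
    have hk'' : (k : ℝ) ≤ L ^ (n - 1) / 2 := le_trans hk' (Nat.floor_le (by positivity))
    calc (k : ℝ) * δ ≤ (L ^ (n - 1) / 2) * δ := by
          apply mul_le_mul_of_nonneg_right hk'' hδpos.le
      _ = 1 := by rw [hδ]; field_simp
  have hsep : IsSep (fun x => TT L x) n 1 E := by
    intro x hx y hy hxy
    obtain ⟨k, hk, rfl⟩ := Finset.mem_image.1 hx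
    obtain ⟨l, hl, rfl⟩ := Finset.mem_image.1 hy
    have hkl : k ≠ l := by rintro rfl; exact hxy rfl
    refine ⟨n - 1, by omega, ?_⟩
    have e1 : (fun x : Hs => TT L x)^[n-1] (pt k) = ((L:ℂ)^(n-1) * (((k:ℝ) * δ : ℝ) : ℂ)) • ee :=
      iter_smul L (n-1) _
    have e2 : (fun x : Hs => TT L x)^[n-1] (pt l) = ((L:ℂ)^(n-1) * (((l:ℝ) * δ : ℝ) : ℂ)) • ee :=
      iter_smul L (n-1) _
    rw [e1, e2, dist_eq_norm, ← sub_smul, norm_smul_ee, ← mul_sub]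
    have e3 : ((((k:ℝ) * δ : ℝ) : ℂ) - (((l:ℝ) * δ : ℝ) : ℂ)) = ((((k:ℝ) - l) * δ : ℝ) : ℂ) := by
      push_cast; ring
    rw [e3, norm_mul, norm_pow, Complex.norm_real, Complex.norm_real,
      Real.norm_eq_abs, Real.norm_eq_abs, abs_of_nonneg hLpos.le, abs_mul,
      abs_of_nonneg hδpos.le]
    have habs : 1 ≤ |(k:ℝ) - l| := by
      have h1 : ((k:ℤ) - l) ≠ 0 := by
        intro h; apply hkl; omega
      have h2 : (1:ℤ) ≤ |(k:ℤ) - l| := Int.one_le_abs h1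
      calc (1:ℝ) ≤ (|(k:ℤ) - l| : ℤ) := by exact_mod_cast h2
        _ = |(k:ℝ) - l| := by push_cast; rfl
    have : L ^ (n-1) * (1 * δ) ≤ L ^ (n-1) * (|(k:ℝ) - l| * δ) := by
      apply mul_le_mul_of_nonneg_left _ (by positivity)
      apply mul_le_mul_of_nonneg_right habs hδpos.le
    have hδval : L ^ (n-1) * (1 * δ) = 2 := by rw [hδ]; field_simp
    linarith
  obtain ⟨P, hP1, hP⟩ := sepNum_upper hL.le Kseg_compact one_pos
  obtain ⟨-, hbdd⟩ := hP n hn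
  have hle : N ≤ sepNum (fun x => TT L x) Kseg n 1 :=
    le_csSup hbdd ⟨E, hsub, hsep, hcard⟩
  have h2 : L ^ (n - 1) / 2 < (N : ℝ) := by
    rw [hN]
    push_cast
    exact Nat.lt_floor_add_one _
  calc L ^ (n-1)/2 ≤ (N : ℝ) := h2.le
    _ ≤ _ := by exact_mod_cast hle

end MainAux

theorem compact_operator_with_large_finite_entropy (C : ℝ) (hC : 0 < C) :
    ∃ T : lp (fun _ : ℕ => ℂ) 2 →L[ℂ] lp (fun _ : ℕ => ℂ) 2,
      IsCompactOperator T ∧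
      (C : EReal) < entBowen (fun x => T x) ∧
      entBowen (fun x => T x) < ⊤ ∧
      ∀ x : lp (fun _ : ℕ => ℂ) 2, ¬ Dense (Set.range fun n : ℕ => (T ^ n) x) := by
  classical
  set L : ℝ := Real.exp (C + 1) with hLdef
  have hL1 : 1 < L := Real.one_lt_exp_iff.2 (by linarith)
  have hLpos : (0:ℝ) < L := lt_trans one_pos hL1
  have hlogL : Real.log L = C + 1 := Real.log_exp _
  refine ⟨TT L, ?_, ?_, ?_, ?_⟩
  -- compact operator
  · refine ⟨(fun c : ℂ => c • ee) '' Metric.closedBall 0 (L + 1), ?_, ?_⟩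
    · exact (isCompact_closedBall (0:ℂ) (L+1)).image (continuous_id.smul continuous_const)
    · apply Filter.mem_of_superset (Metric.ball_mem_nhds (0 : Hs) one_pos)
      intro x hx
      refine ⟨(L : ℂ) * x 0, ?_, rfl⟩
      rw [Metric.mem_closedBall, dist_zero_right]
      have h1 : ‖x‖ < 1 := by rwa [Metric.mem_ball, dist_zero_right] at hx
      calc ‖(L:ℂ) * x 0‖ = L * ‖x 0‖ := by
            rw [norm_mul, Complex.norm_real, Real.norm_eq_abs, abs_of_nonneg hLpos.le]
        _ ≤ L * ‖x‖ := mul_le_mul_of_nonneg_left (lp.norm_apply_le_norm (by norm_num) x 0)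
            hLpos.le
        _ ≤ L * 1 := mul_le_mul_of_nonneg_left h1.le hLpos.le
        _ ≤ L + 1 := by linarith
  -- lower bound for entropy
  · have hev : ∀ᶠ n : ℕ in atTop,
        ((C + 1/2 : ℝ) : EReal) ≤
          ((Real.log (sepNum (fun x => TT L x) Kseg n 1) / n : ℝ) : EReal) := by
      filter_upwards [Filter.eventually_ge_atTop (max 2 (⌈2 * (C + 1 + Real.log 2)⌉₊))]
        with n hn
      have hn2 : 2 ≤ n := le_trans (le_max_left _ _) hn
      have hn1 : 1 ≤ n := by omega
      have hnR : 2 * (C + 1 + Real.log 2) ≤ (n : ℝ) := by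
        have h1 : ⌈2 * (C + 1 + Real.log 2)⌉₊ ≤ n := le_trans (le_max_right _ _) hn
        exact le_trans (Nat.le_ceil _) (by exact_mod_cast h1)
      have hnpos : (0:ℝ) < n := by positivity
      have hLp : (0:ℝ) < L ^ (n - 1) := pow_pos hLpos _
      have hlow := sepNum_lower hL1 hn1
      have hlog1 : Real.log (L ^ (n-1) / 2) ≤
          Real.log (sepNum (fun x => TT L x) Kseg n 1) :=
        Real.log_le_log (by positivity) hlow
      have hlog2 : Real.log (L ^ (n-1) / 2) = (n - 1 : ℝ) * (C+1) - Real.log 2 := by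
        rw [Real.log_div (by positivity) (by norm_num), Real.log_pow, hlogL]
        rw [Nat.cast_sub hn1]
        push_cast
        ring
      rw [EReal.coe_le_coe_iff, le_div_iff₀ hnpos]
      have : (C + 1/2) * n ≤ (n - 1 : ℝ) * (C+1) - Real.log 2 := by nlinarith
      linarith [hlog1, hlog2.symm.le, hlog2.le]
    have hlim : ((C + 1/2 : ℝ) : EReal) ≤
        limsup (fun n : ℕ =>
          ((Real.log (sepNum (fun x => TT L x) Kseg n 1) / n : ℝ) : EReal)) atTop :=
      Filter.le_limsup_of_frequently_le' hev.frequently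
    have hent : limsup (fun n : ℕ =>
          ((Real.log (sepNum (fun x => TT L x) Kseg n 1) / n : ℝ) : EReal)) atTop
        ≤ entBowen (fun x => TT L x) :=
      le_iSup_of_le Kseg (le_iSup_of_le Kseg_compact
        (le_iSup_of_le 1 (le_iSup_of_le one_pos le_rfl)))
    calc (C : EReal) < ((C + 1/2 : ℝ) : EReal) := EReal.coe_lt_coe_iff.2 (by linarith)
      _ ≤ _ := le_trans hlim hent
  -- upper bound
  · have hub : entBowen (fun x => TT L x) ≤ ((2 * (C+1) + 1 : ℝ) : EReal) := by
      apply iSup_le; intro K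
      apply iSup_le; intro hK
      apply iSup_le; intro ε
      apply iSup_le; intro hε
      have := limsup_le_upper hL1.le hK hε
      rwa [hlogL] at this
    exact lt_of_le_of_lt hub (EReal.coe_lt_top _)
  -- not hypercyclic
  · intro x hdense
    set ee1 : Hs := lp.single 2 1 1 with hee1
    set cc : ℂ := ((1 + ‖x 1‖ : ℝ) : ℂ) with hcc
    have hccpos : (0:ℝ) < 1 + ‖x 1‖ := by positivity
    set z : Hs := x + cc • ee1 with hz
    set S : Set Hs := ({x} : Set Hs) ∪ ↑(Submodule.span ℂ ({ee} : Set Hs)) with hS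
    have hsubset : Set.range (fun n : ℕ => ((TT L) ^ n) x) ⊆ S := by
      rintro - ⟨n, rfl⟩
      cases n with
      | zero => left; simp
      | succ m =>
        right
        show ((TT L) ^ (m+1)) x ∈ ↑(Submodule.span ℂ ({ee} : Set Hs))
        rw [pow_succ', ContinuousLinearMap.mul_apply, TT_apply]
        exact Submodule.smul_mem _ _ (Submodule.mem_span_singleton_self ee)
    have hSclosed : IsClosed S :=
      isClosed_singleton.union (Submodule.span ℂ ({ee} : Set Hs)).closed_of_finiteDimensional
    have hclsub : closure (Set.range (fun n : ℕ => ((TT L) ^ n) x)) ⊆ S :=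
      closure_minimal hsubset hSclosed
    rw [hdense.closure_eq] at hclsub
    have hzS : z ∈ S := hclsub (Set.mem_univ z)
    have hz1 : (z : ∀ _ : ℕ, ℂ) 1 = x 1 + cc := by
      rw [hz]
      rw [lp.coeFn_add]
      simp only [Pi.add_apply]
      congr 1
      rw [lp.coeFn_smul]
      simp only [Pi.smul_apply, smul_eq_mul, hee1]
      rw [lp.single_apply_self]
      ring
    rcases hzS with hzx | hzspan
    · -- z = x impossible
      have : cc • ee1 = 0 := by
        have hx : z = x := hzx
        rw [hz] at hx
        have := congrArg (fun w : Hs => w - x) hx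
        simpa [add_sub_cancel_left] using this
      have h1 : ((cc • ee1 : Hs) : ∀ _ : ℕ, ℂ) 1 = 0 := by rw [this]; simp
      rw [lp.coeFn_smul] at h1
      simp only [Pi.smul_apply, smul_eq_mul, hee1] at h1
      rw [lp.single_apply_self] at h1
      rw [mul_one] at h1
      rw [hcc] at h1
      have : (1 + ‖x 1‖ : ℝ) = 0 := by exact_mod_cast h1
      linarith
    · -- z ∈ span {ee} impossible: coordinate 1 of span elements is 0
      obtain ⟨a, ha⟩ := Submodule.mem_span_singleton.1 hzspan
      have h1 : ((a • ee : Hs) : ∀ _ : ℕ, ℂ) 1 = x 1 + cc := by rw [ha]; exact hz1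
      rw [coord_smul_ee_one] at h1
      have h2 : x 1 = -cc := eq_neg_of_add_eq_zero_left h1.symm
      have h3 : ‖x 1‖ = ‖cc‖ := by rw [h2, norm_neg]
      rw [hcc, Complex.norm_real, Real.norm_eq_abs, abs_of_pos hccpos] at h3
      linarith
end

section
/- Let T be a bounded linear operator on a Banach space X such that T has an eigenvalue λ with |λ| > 1. Then the Bowen topological entropy of T is at least log|λ| > 0. -/
open Filter Topology

open Metric in
lemma bddAbove_sepSet {Y : Type*} [PseudoMetricSpace Y] (f : Y → Y) (hf : Continuous f)
    (K : Set Y) (hK : IsCompact K) (n : ℕ) {ε : ℝ} (hε : 0 < ε) :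
    BddAbove {m : ℕ | ∃ E : Finset Y, ↑E ⊆ K ∧ IsSep f n ε E ∧ E.card = m} := by
  classical
  set g := fun y : Y => fun i : Fin n => f^[(i : ℕ)] y with hgdef
  have hg : Continuous g := continuous_pi fun i => hf.iterate _
  obtain ⟨t, htfin, htcov⟩ := (totallyBounded_iff.1 (hK.image hg).totallyBounded) (ε / 2)
    (by linarith)
  refine ⟨htfin.toFinset.card, ?_⟩
  rintro m ⟨E, hEK, hsep, rfl⟩
  have hchoice : ∀ e ∈ E, ∃ c ∈ t, g e ∈ ball c (ε / 2) := by
    intro e he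
    have := htcov (Set.mem_image_of_mem g (hEK he))
    simpa using this
  choose! c hct hcb using hchoice
  refine Finset.card_le_card_of_injOn c (fun e he => htfin.mem_toFinset.2 (hct e he)) ?_
  intro e he e' he' hcc
  by_contra hne
  obtain ⟨i, hi, hlt⟩ := hsep e (by simpa using he) e' (by simpa using he') hne
  have h1 : dist (g e) (c e) < ε / 2 := by
    simpa [mem_ball, dist_comm] using hcb e (by simpa using he)
  have h2 : dist (c e') (g e') < ε / 2 := by
    simpa [mem_ball, dist_comm] using hcb e' (by simpa using he')
  have hpi : dist (f^[i] e) (f^[i] e') ≤ dist (g e) (g e') := by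
    simpa [hgdef] using dist_le_pi_dist (g e) (g e') ⟨i, hi⟩
  have : dist (g e) (g e') < ε := by
    rw [← hcc] at h2
    calc dist (g e) (g e') ≤ dist (g e) (c e) + dist (c e) (g e') := dist_triangle _ _ _
      _ < ε / 2 + ε / 2 := add_lt_add h1 h2
      _ = ε := by ring
  linarith [hlt.trans_le hpi]

lemma iterate_smul_eig {X : Type*} [NormedAddCommGroup X] [NormedSpace ℂ X]
    (T : X →L[ℂ] X) (μ : ℂ) (x : X) (heig : T x = μ • x) (c : ℂ) (i : ℕ) :
    (fun y => T y)^[i] (c • x) = (c * μ ^ i) • x := by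
  induction i with
  | zero => simp
  | succ k ih =>
    rw [Function.iterate_succ_apply', ih]
    show T ((c * μ ^ k) • x) = _
    rw [map_smul, heig, smul_smul, pow_succ, mul_assoc]

lemma one_le_abs_cast_sub {j k : ℕ} (h : j ≠ k) : (1 : ℝ) ≤ |(j : ℝ) - (k : ℝ)| := by
  have h1 : (1 : ℤ) ≤ |(j : ℤ) - (k : ℤ)| :=
    Int.one_le_abs (sub_ne_zero.2 (by exact_mod_cast h))
  have : ((1 : ℤ) : ℝ) ≤ ((|(j : ℤ) - (k : ℤ)| : ℤ) : ℝ) := by exact_mod_cast h1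
  simpa [Int.cast_abs] using this

theorem entropy_ge_log_of_eigenvalue
    {X : Type*} [NormedAddCommGroup X] [NormedSpace ℂ X] [CompleteSpace X]
    (T : X →L[ℂ] X) (μ : ℂ) (hμ : 1 < ‖μ‖)
    (x : X) (hx : x ≠ 0) (heig : T x = μ • x) :
    (0 : EReal) < ((Real.log ‖μ‖ : ℝ) : EReal) ∧
      ((Real.log ‖μ‖ : ℝ) : EReal) ≤ entBowen (fun y => T y) := by
  classical
  have hr1 : (1 : ℝ) < ‖μ‖ := hμ
  have hr0 : (0 : ℝ) < ‖μ‖ := by linarith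
  have hx0 : (0 : ℝ) < ‖x‖ := norm_pos_iff.2 hx
  have hlogr : (0 : ℝ) < Real.log ‖μ‖ := Real.log_pos hr1
  constructor
  · exact_mod_cast hlogr
  set f := fun y : X => T y with hfdef
  set ε := ‖x‖ / 4 with hεdef
  have hε : (0 : ℝ) < ε := by positivity
  set K := (fun t : ℝ => (t : ℂ) • x) '' Set.Icc (0 : ℝ) 1 with hKdef
  have hK : IsCompact K :=
    isCompact_Icc.image (Complex.continuous_ofReal.smul continuous_const)
  -- the key pointwise bound
  have key : ∀ n : ℕ, 1 ≤ n →
      ((n : ℝ) - 1) * Real.log ‖μ‖ / n ≤ Real.log (sepNum f K n ε) / n := by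
    intro n hn
    set m := n - 1 with hmdef
    have hpm : (0 : ℝ) < ‖μ‖ ^ m := pow_pos hr0 m
    have hsn : (0 : ℝ) < 2 * ‖μ‖ ^ m := by positivity
    set s : ℝ := 2 * ‖μ‖ ^ m with hsdef
    set N := ⌊s⌋₊ with hNdef
    set φ : ℕ → X := fun j => (((j : ℝ) / s : ℝ) : ℂ) • x with hφdef
    have hφinj : Set.InjOn φ ↑(Finset.range N) := by
      intro j _ k _ hjk
      have h1 : ((((j : ℝ) / s : ℝ) : ℂ) - (((k : ℝ) / s : ℝ) : ℂ)) • x = 0 := by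
        rw [sub_smul]
        have h0 : (((j : ℝ) / s : ℝ) : ℂ) • x = (((k : ℝ) / s : ℝ) : ℂ) • x := hjk
        rw [h0, sub_self]
      have h2 : (((j : ℝ) / s : ℝ) : ℂ) = (((k : ℝ) / s : ℝ) : ℂ) := by
        rcases smul_eq_zero.1 h1 with h | h
        · exact sub_eq_zero.1 h
        · exact absurd h hx
      have h3 : (j : ℝ) / s = (k : ℝ) / s := by exact_mod_cast h2
      field_simp at h3
      exact_mod_cast h3
    set E := (Finset.range N).image φ with hEdef
    have hEK : ↑E ⊆ K := by
      intro y hy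
      simp only [hEdef, Finset.coe_image, Set.mem_image, Finset.mem_coe,
        Finset.mem_range] at hy
      obtain ⟨j, hj, rfl⟩ := hy
      refine ⟨(j : ℝ) / s, ⟨by positivity, ?_⟩, rfl⟩
      have hjN : (j : ℝ) < N := by exact_mod_cast hj
      have hNs : (N : ℝ) ≤ s := Nat.floor_le hsn.le
      rw [div_le_one hsn]
      linarith
    have hsep : IsSep f n ε E := by
      intro u hu v hv huv
      simp only [hEdef, Finset.mem_image, Finset.mem_range] at hu hv
      obtain ⟨j, hj, rfl⟩ := hu
      obtain ⟨k, hk, rfl⟩ := hv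
      refine ⟨m, by omega, ?_⟩
      have hjk : j ≠ k := fun h => huv (by rw [h])
      have hiter : ∀ a : ℝ, f^[m] ((a : ℂ) • x) = ((a : ℂ) * μ ^ m) • x := fun a =>
        iterate_smul_eig T μ x heig _ _
      show ε < dist (f^[m] (φ j)) (f^[m] (φ k))
      rw [hφdef]
      simp only
      rw [hiter, hiter, dist_eq_norm, ← sub_smul, norm_smul, ← sub_mul, norm_mul,
        norm_pow]
      have h1 : ‖(((j : ℝ) / s : ℝ) : ℂ) - (((k : ℝ) / s : ℝ) : ℂ)‖
          = |(j : ℝ) / s - (k : ℝ) / s| := by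
        rw [← Complex.ofReal_sub, Complex.norm_real, Real.norm_eq_abs]
      rw [h1]
      have h2 : (1 : ℝ) / s ≤ |(j : ℝ) / s - (k : ℝ) / s| := by
        rw [div_sub_div_same, abs_div, abs_of_pos hsn]
        gcongr
        exact one_le_abs_cast_sub hjk
      have h3 : ε < 1 / s * ‖μ‖ ^ m * ‖x‖ := by
        have hss : 1 / s * ‖μ‖ ^ m = 1 / 2 := by
          rw [hsdef, one_div, mul_inv, mul_assoc, inv_mul_cancel₀ hpm.ne', mul_one, one_div]
        have heq : 1 / s * ‖μ‖ ^ m * ‖x‖ = ‖x‖ / 2 := by rw [hss]; ring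
        rw [heq, hεdef]
        linarith
      calc ε < 1 / s * ‖μ‖ ^ m * ‖x‖ := h3
        _ ≤ |(j : ℝ) / s - (k : ℝ) / s| * ‖μ‖ ^ m * ‖x‖ := by gcongr
    have hcard : E.card = N := by
      rw [hEdef, Finset.card_image_of_injOn hφinj, Finset.card_range]
    have hNle : N ≤ sepNum f K n ε :=
      le_csSup (bddAbove_sepSet f T.continuous K hK n hε) ⟨E, hEK, hsep, hcard⟩
    have hpow_le : ‖μ‖ ^ m ≤ (sepNum f K n ε : ℝ) := by
      have h1 : s - 1 < (N : ℝ) := Nat.sub_one_lt_floor s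
      have h2 : (1 : ℝ) ≤ ‖μ‖ ^ m := one_le_pow₀ hr1.le
      have h3 : (N : ℝ) ≤ (sepNum f K n ε : ℝ) := by exact_mod_cast hNle
      rw [hsdef] at h1
      linarith
    have hlog : ((n : ℝ) - 1) * Real.log ‖μ‖ ≤ Real.log (sepNum f K n ε) := by
      have h1 : Real.log (‖μ‖ ^ m) ≤ Real.log (sepNum f K n ε) :=
        Real.log_le_log hpm hpow_le
      rw [Real.log_pow] at h1
      have h2 : ((m : ℕ) : ℝ) = (n : ℝ) - 1 := by
        rw [hmdef]
        push_cast [Nat.cast_sub hn]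
        ring
      rwa [h2] at h1
    have hn0 : (0 : ℝ) < (n : ℝ) := by exact_mod_cast hn
    gcongr
  -- limsup argument
  refine le_trans ?_ (le_iSup_of_le K (le_iSup_of_le hK (le_iSup_of_le ε
    (le_iSup_of_le hε le_rfl))))
  set u := fun n : ℕ => ((Real.log (sepNum f K n ε) / n : ℝ) : EReal) with hudef
  set w := fun n : ℕ => (((1 - 1 / (n : ℝ)) * Real.log ‖μ‖ : ℝ) : EReal) with hwdef
  have hw : Tendsto w atTop (𝓝 ((Real.log ‖μ‖ : ℝ) : EReal)) := by
    rw [hwdef, EReal.tendsto_coe]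
    have := ((tendsto_const_nhds (α := ℕ) (x := (1 : ℝ))).sub tendsto_one_div_atTop_nhds_zero_nat).mul_const
      (Real.log ‖μ‖)
    simpa using this
  have hev : w ≤ᶠ[atTop] u := by
    filter_upwards [eventually_ge_atTop 1] with n hn
    rw [hwdef, hudef]
    rw [EReal.coe_le_coe_iff]
    have hn0 : (0 : ℝ) < (n : ℝ) := by exact_mod_cast hn
    have heq : (1 - 1 / (n : ℝ)) * Real.log ‖μ‖ = ((n : ℝ) - 1) * Real.log ‖μ‖ / n := by
      field_simp
    rw [heq]
    exact key n hn
  rw [← hw.limsup_eq]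
  exact limsup_le_limsup hev
end

section
/- Let (X₁,d₁), (X₂,d₂) be metric spaces and T_i : X_i → X_i uniformly continuous maps. With the max metric d on X₁ × X₂, the product map T₁ × T₂ is uniformly continuous and its Bowen topological entropy satisfies h_d(T₁ × T₂) ≤ h_{d₁}(T₁) + h_{d₂}(T₂). -/
open Filter Topology

section Aux
variable {Y : Type*} [PseudoMetricSpace Y] {f : Y → Y}

lemma aux_uc_iterate (hf : UniformContinuous f) (i : ℕ) : UniformContinuous f^[i] := by
  induction i with
  | zero => simpa using uniformContinuous_id
  | succ k ih => rw [Function.iterate_succ']; exact hf.comp ih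

/-- uniform delta for all iterates below n -/
lemma aux_delta (hf : UniformContinuous f) (n : ℕ) {ε : ℝ} (hε : 0 < ε) :
    ∃ δ > 0, ∀ x y : Y, dist x y < δ → ∀ i < n, dist (f^[i] x) (f^[i] y) < ε := by
  induction n with
  | zero => exact ⟨1, one_pos, fun x y _ i hi => absurd hi (Nat.not_lt_zero i)⟩
  | succ k ih =>
    obtain ⟨δ₁, hδ₁, H₁⟩ := ih
    obtain ⟨δ₂, hδ₂, H₂⟩ := Metric.uniformContinuous_iff.1 (aux_uc_iterate hf k) ε hε
    refine ⟨min δ₁ δ₂, lt_min hδ₁ hδ₂, fun x y hxy i hi => ?_⟩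
    rcases Nat.lt_succ_iff_lt_or_eq.1 hi with h | h
    · exact H₁ x y (hxy.trans_le (min_le_left _ _)) i h
    · subst h; exact H₂ (hxy.trans_le (min_le_right _ _))

lemma aux_bdd (hf : UniformContinuous f) {K : Set Y} (hK : IsCompact K) (n : ℕ)
    {ε : ℝ} (hε : 0 < ε) :
    BddAbove {m : ℕ | ∃ E : Finset Y, ↑E ⊆ K ∧ IsSep f n ε E ∧ E.card = m} := by
  obtain ⟨δ, hδ, Hδ⟩ := aux_delta hf n hε
  obtain ⟨t, htf, htK⟩ := (Metric.totallyBounded_iff.1 hK.totallyBounded (δ/2) (by linarith))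
  classical
  refine ⟨htf.toFinset.card, fun m hm => ?_⟩
  obtain ⟨E, hEK, hsep, rfl⟩ := hm
  set g : Y → Y := fun x => if h : ∃ c ∈ t, dist x c < δ/2 then h.choose else x with hg
  have hgmem : ∀ x ∈ K, g x ∈ t ∧ dist x (g x) < δ/2 := by
    intro x hx
    have h : ∃ c ∈ t, dist x c < δ/2 := by simpa [Metric.mem_ball] using htK hx
    simp only [hg, dif_pos h]
    exact ⟨h.choose_spec.1, h.choose_spec.2⟩
  refine Finset.card_le_card_of_injOn g (fun x hx => htf.mem_toFinset.2 (hgmem x (hEK hx)).1) ?_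
  intro x hx y hy hxy
  by_contra hne
  obtain ⟨i, hi, hlt⟩ := hsep x hx y hy hne
  have d1 := (hgmem x (hEK hx)).2
  have d2 := (hgmem y (hEK hy)).2
  have : dist x y < δ := by
    calc dist x y ≤ dist x (g x) + dist (g x) y := dist_triangle _ _ _
      _ = dist x (g x) + dist y (g y) := by rw [hxy, dist_comm (g y) y]
      _ < δ/2 + δ/2 := add_lt_add d1 d2
      _ = δ := by ring
  exact absurd (Hδ x y this i hi) (not_lt.2 hlt.le)

/-- existence of a maximal separated set realizing sepNum which ε-dominates K -/
lemma aux_maximal (hf : UniformContinuous f) {K : Set Y} (hK : IsCompact K) (n : ℕ)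
    {ε : ℝ} (hε : 0 < ε) :
    ∃ F : Finset Y, ↑F ⊆ K ∧ IsSep f n ε F ∧ F.card = sepNum f K n ε ∧
      ∀ x ∈ K, ∃ y ∈ F, ∀ i < n, dist (f^[i] x) (f^[i] y) ≤ ε := by
  classical
  set S := {m : ℕ | ∃ E : Finset Y, ↑E ⊆ K ∧ IsSep f n ε E ∧ E.card = m} with hS
  have hne : S.Nonempty := ⟨0, ∅, by simp [IsSep]⟩
  have hbdd := aux_bdd hf hK n hε
  have hmem : sSup S ∈ S := Nat.sSup_mem hne hbdd
  obtain ⟨F, hFK, hFsep, hFcard⟩ := hmem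
  refine ⟨F, hFK, hFsep, hFcard, fun x hx => ?_⟩
  by_contra hcon
  push_neg at hcon
  have hxF : x ∉ F := by
    intro h
    obtain ⟨i, hi, hlt⟩ := hcon x h
    simp at hlt; linarith
  have hins : (insert x F).card ∈ S := by
    refine ⟨insert x F, ?_, ?_, rfl⟩
    · rw [Finset.coe_insert]; exact Set.insert_subset hx hFK
    · intro a ha b hb hab
      rcases Finset.mem_insert.1 ha with ha' | ha'
      · rcases Finset.mem_insert.1 hb with hb' | hb'
        · exact absurd (ha'.trans hb'.symm) hab
        · rw [ha']; exact hcon b hb'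
      · rcases Finset.mem_insert.1 hb with hb' | hb'
        · obtain ⟨i, hi, hlt⟩ := hcon a ha'
          exact ⟨i, hi, by rw [hb']; rwa [dist_comm]⟩
        · exact hFsep a ha' b hb' hab
  have : (insert x F).card ≤ sSup S := le_csSup hbdd hins
  rw [Finset.card_insert_of_notMem hxF, hFcard] at this
  change sepNum f K n ε + 1 ≤ sSup S at this
  rw [show sSup S = sepNum f K n ε from rfl] at this
  omega

end Aux

theorem entropy_prod_le
    {X₁ X₂ : Type*} [MetricSpace X₁] [MetricSpace X₂]
    (T₁ : X₁ → X₁) (T₂ : X₂ → X₂)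
    (h₁ : UniformContinuous T₁) (h₂ : UniformContinuous T₂) :
    UniformContinuous (Prod.map T₁ T₂) ∧
      entBowen (Prod.map T₁ T₂) ≤ entBowen T₁ + entBowen T₂ := by
  classical
  refine ⟨h₁.prodMap h₂, ?_⟩
  rw [entBowen]
  refine iSup_le fun K => iSup_le fun hK => iSup_le fun ε => iSup_le fun hε => ?_
  set K₁ : Set X₁ := Prod.fst '' K with hK₁def
  set K₂ : Set X₂ := Prod.snd '' K with hK₂def
  have hK₁ : IsCompact K₁ := hK.image continuous_fst
  have hK₂ : IsCompact K₂ := hK.image continuous_snd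
  have hε2 : (0:ℝ) < ε/2 := by linarith
  -- counting inequality
  have count : ∀ n : ℕ, sepNum (Prod.map T₁ T₂) K n ε ≤
      sepNum T₁ K₁ n (ε/2) * sepNum T₂ K₂ n (ε/2) := by
    intro n
    obtain ⟨F₁, hF₁K, hF₁sep, hF₁card, hF₁max⟩ := aux_maximal h₁ hK₁ n hε2
    obtain ⟨F₂, hF₂K, hF₂sep, hF₂card, hF₂max⟩ := aux_maximal h₂ hK₂ n hε2
    refine csSup_le ⟨0, ∅, by simp [IsSep]⟩ ?_
    rintro m ⟨E, hEK, hsep, rfl⟩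
    set c₁ : X₁ → X₁ := fun x => if h : ∃ y ∈ F₁, ∀ i < n, dist (T₁^[i] x) (T₁^[i] y) ≤ ε/2
      then h.choose else x with hc₁
    set c₂ : X₂ → X₂ := fun x => if h : ∃ y ∈ F₂, ∀ i < n, dist (T₂^[i] x) (T₂^[i] y) ≤ ε/2
      then h.choose else x with hc₂
    have hc₁spec : ∀ x ∈ K₁, c₁ x ∈ F₁ ∧ ∀ i < n, dist (T₁^[i] x) (T₁^[i] (c₁ x)) ≤ ε/2 := by
      intro x hx
      have h := hF₁max x hx
      simp only [hc₁, dif_pos h]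
      exact ⟨h.choose_spec.1, h.choose_spec.2⟩
    have hc₂spec : ∀ x ∈ K₂, c₂ x ∈ F₂ ∧ ∀ i < n, dist (T₂^[i] x) (T₂^[i] (c₂ x)) ≤ ε/2 := by
      intro x hx
      have h := hF₂max x hx
      simp only [hc₂, dif_pos h]
      exact ⟨h.choose_spec.1, h.choose_spec.2⟩
    calc E.card ≤ (F₁ ×ˢ F₂).card := by
          refine Finset.card_le_card_of_injOn (fun p => (c₁ p.1, c₂ p.2)) ?_ ?_
          · intro p hp
            have hpK := hEK hp
            exact Finset.mem_product.2 ⟨(hc₁spec p.1 ⟨p, hpK, rfl⟩).1, (hc₂spec p.2 ⟨p, hpK, rfl⟩).1⟩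
          · intro p hp q hq hpq
            by_contra hne
            obtain ⟨i, hi, hlt⟩ := hsep p hp q hq hne
            have hp1 : p.1 ∈ K₁ := ⟨p, hEK hp, rfl⟩
            have hp2 : p.2 ∈ K₂ := ⟨p, hEK hp, rfl⟩
            have hq1 : q.1 ∈ K₁ := ⟨q, hEK hq, rfl⟩
            have hq2 : q.2 ∈ K₂ := ⟨q, hEK hq, rfl⟩
            have e1 : c₁ p.1 = c₁ q.1 := congrArg Prod.fst hpq
            have e2 : c₂ p.2 = c₂ q.2 := congrArg Prod.snd hpq
            have d1 : dist (T₁^[i] p.1) (T₁^[i] q.1) ≤ ε := by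
              calc dist (T₁^[i] p.1) (T₁^[i] q.1)
                  ≤ dist (T₁^[i] p.1) (T₁^[i] (c₁ p.1)) + dist (T₁^[i] (c₁ q.1)) (T₁^[i] q.1) := by
                    rw [e1]
                    exact dist_triangle _ _ _
                _ ≤ ε/2 + ε/2 := add_le_add ((hc₁spec p.1 hp1).2 i hi)
                    (by rw [dist_comm]; exact (hc₁spec q.1 hq1).2 i hi)
                _ = ε := by ring
            have d2 : dist (T₂^[i] p.2) (T₂^[i] q.2) ≤ ε := by
              calc dist (T₂^[i] p.2) (T₂^[i] q.2)
                  ≤ dist (T₂^[i] p.2) (T₂^[i] (c₂ p.2)) + dist (T₂^[i] (c₂ q.2)) (T₂^[i] q.2) := by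
                    rw [e2]
                    exact dist_triangle _ _ _
                _ ≤ ε/2 + ε/2 := add_le_add ((hc₂spec p.2 hp2).2 i hi)
                    (by rw [dist_comm]; exact (hc₂spec q.2 hq2).2 i hi)
                _ = ε := by ring
            rw [Prod.map_iterate, Prod.dist_eq] at hlt
            simp only [Prod.map_fst, Prod.map_snd] at hlt
            exact absurd hlt (not_lt.2 (max_le d1 d2))
      _ = F₁.card * F₂.card := Finset.card_product F₁ F₂
      _ = _ := by rw [hF₁card, hF₂card]
  -- entropy-level inequality
  set u : ℕ → EReal := fun n => ((Real.log (sepNum T₁ K₁ n (ε/2)) / n : ℝ) : EReal) with hu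
  set v : ℕ → EReal := fun n => ((Real.log (sepNum T₂ K₂ n (ε/2)) / n : ℝ) : EReal) with hv
  have hptwise : ∀ n : ℕ,
      ((Real.log (sepNum (Prod.map T₁ T₂) K n ε) / n : ℝ) : EReal) ≤ u n + v n := by
    intro n
    have hlog : Real.log (sepNum (Prod.map T₁ T₂) K n ε) ≤
        Real.log (sepNum T₁ K₁ n (ε/2)) + Real.log (sepNum T₂ K₂ n (ε/2)) := by
      rcases Nat.eq_zero_or_pos (sepNum (Prod.map T₁ T₂) K n ε) with h0 | hpos
      · rw [h0]
        simp only [Nat.cast_zero, Real.log_zero]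
        exact add_nonneg (Real.log_natCast_nonneg _) (Real.log_natCast_nonneg _)
      · have h1 : 1 ≤ sepNum T₁ K₁ n (ε/2) * sepNum T₂ K₂ n (ε/2) :=
          le_trans hpos (count n)
        have hs₁ : 1 ≤ sepNum T₁ K₁ n (ε/2) := Nat.one_le_iff_ne_zero.2 (by
          intro h; rw [h, zero_mul] at h1; omega)
        have hs₂ : 1 ≤ sepNum T₂ K₂ n (ε/2) := Nat.one_le_iff_ne_zero.2 (by
          intro h; rw [h, mul_zero] at h1; omega)
        calc Real.log (sepNum (Prod.map T₁ T₂) K n ε)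
            ≤ Real.log ((sepNum T₁ K₁ n (ε/2) : ℝ) * (sepNum T₂ K₂ n (ε/2) : ℝ)) := by
              apply Real.log_le_log (by exact_mod_cast hpos)
              rw [← Nat.cast_mul]
              exact_mod_cast count n
          _ = _ := Real.log_mul (by positivity) (by positivity)
    have hdiv : Real.log (sepNum (Prod.map T₁ T₂) K n ε) / n ≤
        Real.log (sepNum T₁ K₁ n (ε/2)) / n + Real.log (sepNum T₂ K₂ n (ε/2)) / n := by
      rw [← add_div]
      rcases Nat.eq_zero_or_pos n with rfl | hn
      · simp
      · exact div_le_div_of_nonneg_right hlog (Nat.cast_nonneg n)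
    calc ((Real.log (sepNum (Prod.map T₁ T₂) K n ε) / n : ℝ) : EReal)
        ≤ ((Real.log (sepNum T₁ K₁ n (ε/2)) / n + Real.log (sepNum T₂ K₂ n (ε/2)) / n : ℝ) : EReal) :=
          EReal.coe_le_coe_iff.2 hdiv
      _ = u n + v n := by rw [EReal.coe_add]
  have hu0 : (0 : EReal) ≤ limsup u atTop := by
    refine le_limsup_of_frequently_le (Frequently.of_forall fun n => ?_)
    exact EReal.coe_nonneg.2 (div_nonneg (Real.log_natCast_nonneg _) (Nat.cast_nonneg n))
  have hv0 : (0 : EReal) ≤ limsup v atTop := by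
    refine le_limsup_of_frequently_le (Frequently.of_forall fun n => ?_)
    exact EReal.coe_nonneg.2 (div_nonneg (Real.log_natCast_nonneg _) (Nat.cast_nonneg n))
  have step1 : limsup (fun n : ℕ => ((Real.log (sepNum (Prod.map T₁ T₂) K n ε) / n : ℝ) : EReal))
      atTop ≤ limsup (fun n => u n + v n) atTop :=
    limsup_le_limsup (Eventually.of_forall hptwise)
  have step2 : limsup (fun n => u n + v n) atTop ≤ limsup u atTop + limsup v atTop :=
    EReal.limsup_add_le (Or.inl (ne_bot_of_le_ne_bot (by simp) hu0))
      (Or.inr (ne_bot_of_le_ne_bot (by simp) hv0))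
  have hub : limsup u atTop ≤ entBowen T₁ := by
    rw [entBowen]
    exact le_iSup_of_le K₁ (le_iSup_of_le hK₁ (le_iSup_of_le (ε/2) (le_iSup_of_le hε2 le_rfl)))
  have hvb : limsup v atTop ≤ entBowen T₂ := by
    rw [entBowen]
    exact le_iSup_of_le K₂ (le_iSup_of_le hK₂ (le_iSup_of_le (ε/2) (le_iSup_of_le hε2 le_rfl)))
  exact step1.trans (step2.trans (add_le_add hub hvb))
end
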